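/- arXiv:1711.05729 — 3 statements merged into one kernel-verified Lean document; each statement's English description precedes it below -/
import Mathlib

section
/- Let H be a Hilbert space, let f : ℕ → H be a bounded sequence and let W ∈ F₁. If for every d ∈ ℕ the uniform Riesz mean with respect to W of the sequence n ↦ ⟨f(n+d), f(n)⟩ equals 0, then the uniform Riesz mean with respect to W of f equals 0 in norm: for every ε > 0 there is l such that ‖E^W_{[M,N]} f‖ < ε whenever W(N) − W(M) ≥ l. -/
open Filter MeasureTheory Finset
open scoped ENNReal Classical

noncomputable section

/-- Discrete derivative (first order difference) of a real sequence. -/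
def dd (f : ℕ → ℝ) : ℕ → ℝ := fun n => f (n + 1) - f n

/-- Discrete derivative of an integer sequence. -/
def ddZ (f : ℕ → ℤ) : ℕ → ℤ := fun n => f (n + 1) - f n

/-- Membership in the class `F_ℓ`:  `F₀` consists of eventually monotone sequences tending
to `0` whose series diverges in absolute value; `F_{ℓ+1} = {f : Δf ∈ F_ℓ}`. -/
def MemF : ℕ → (ℕ → ℝ) → Prop
  | 0 => fun f =>
      (∃ N : ℕ, (∀ m n, N ≤ m → m ≤ n → f m ≤ f n) ∨ (∀ m n, N ≤ m → m ≤ n → f n ≤ f m)) ∧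
      Tendsto f atTop (nhds 0) ∧
      Tendsto (fun N => |∑ n ∈ Finset.Icc 1 N, f n|) atTop atTop
  | (ℓ + 1) => fun f => MemF ℓ (dd f)

/-- `R ⊆ ℕ` is `W`-syndetic. -/
def WSyndetic (W : ℕ → ℝ) (R : Set ℕ) : Prop :=
  ∃ l : ℕ, ∀ M N : ℕ, M ≤ N → (l : ℝ) ≤ W N - W M →
    1 ≤ ∑ n ∈ Finset.Icc M N, Set.indicator R (dd W) n

/-- `R ⊆ ℕ` is thick: it contains arbitrarily long intervals. -/
def Thick (R : Set ℕ) : Prop := ∀ k : ℕ, ∃ a : ℕ, ∀ i ≤ k, a + i ∈ R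

/-- The uniform Riesz mean (with respect to `W`) of the sequence `a` equals `L`. -/
def UWLim {E : Type*} [NormedAddCommGroup E] [NormedSpace ℝ E]
    (W : ℕ → ℝ) (a : ℕ → E) (L : E) : Prop :=
  ∀ ε : ℝ, 0 < ε → ∃ l : ℕ, ∀ M N : ℕ, M ≤ N → (l : ℝ) ≤ W N - W M →
    ‖(W N - W M)⁻¹ • ∑ n ∈ Finset.Icc M N, dd W n • a n - L‖ < ε

/-- `x : ℕ → G` is `μ`-well distributed with respect to the uniform Riesz mean along `W`. -/
def WellDistributed {G : Type*} [TopologicalSpace G] [MeasurableSpace G]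
    (W : ℕ → ℝ) (x : ℕ → G) (μ : Measure G) : Prop :=
  ∀ F : C(G, ℂ), UWLim W (fun n => F (x n)) (∫ g, F g ∂μ)

/-- `p(Δ)f` for an integer polynomial `p`. -/
def polyDelta (p : Polynomial ℤ) (f : ℕ → ℝ) : ℕ → ℝ :=
  fun n => ∑ j ∈ Finset.range (p.natDegree + 1), (p.coeff j : ℝ) * dd^[j] f n

/-- `E ⊆ ℕ` has positive upper Banach density. -/
def PosUpperBanach (E : Set ℕ) : Prop :=
  0 < Filter.limsup (fun N : ℕ =>
    ⨆ M : ℕ, (∑ n ∈ Finset.Ico M (M + N), Set.indicator E (fun _ => (1 : ℝ)) n) / N) atTop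

lemma tele (W : ℕ → ℝ) : ∀ M N : ℕ, M ≤ N → ∑ n ∈ Finset.Ico M N, dd W n = W N - W M := by
  intro M N h
  induction N, h using Nat.le_induction with
  | base => simp
  | succ n hn ih => rw [Finset.sum_Ico_succ_top (by omega), ih]; simp only [dd]; ring

lemma teleIcc (W : ℕ → ℝ) (M N : ℕ) (h : M ≤ N) :
    ∑ n ∈ Finset.Icc M N, dd W n = W (N + 1) - W M := by
  rw [← Finset.Ico_add_one_right_eq_Icc, tele W M (N+1) (by omega)]

lemma sum_Icc_shift {E : Type*} [AddCommMonoid E] (g : ℕ → E) (M N m : ℕ) :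
    ∑ k ∈ Finset.Icc (M + m) (N + m), g k = ∑ n ∈ Finset.Icc M N, g (n + m) := by
  rw [add_comm M m, add_comm N m, ← Finset.map_add_left_Icc, Finset.sum_map]
  simp [addLeftEmbedding, add_comm]

section core
variable (W : ℕ → ℝ) (N₀ : ℕ) (D : ℝ)

lemma Wlip (hD : ∀ n, |dd W n| ≤ D) (a m : ℕ) : |W (a + m) - W a| ≤ m * D := by
  rw [← tele W a (a+m) (by omega)]
  calc |∑ n ∈ Finset.Ico a (a+m), dd W n| ≤ ∑ n ∈ Finset.Ico a (a+m), |dd W n| :=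
        Finset.abs_sum_le_sum_abs _ _
    _ ≤ ∑ n ∈ Finset.Ico a (a+m), D := Finset.sum_le_sum (fun n _ => hD n)
    _ = m * D := by rw [Finset.sum_const, Nat.card_Ico]; simp

lemma Wmono (hpos : ∀ n, N₀ ≤ n → 0 ≤ dd W n) {a b : ℕ} (ha : N₀ ≤ a) (hab : a ≤ b) :
    W a ≤ W b := by
  have := tele W a b hab
  have h2 : 0 ≤ ∑ n ∈ Finset.Ico a b, dd W n :=
    Finset.sum_nonneg (fun n hn => hpos n (by simp at hn; omega))
  linarith

lemma sum_bdd {E : Type*} [NormedAddCommGroup E] [NormedSpace ℝ E]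
    (hD : ∀ n, |dd W n| ≤ D) (g : ℕ → E) (K : ℝ) (hg : ∀ n, ‖g n‖ ≤ K) (hK : 0 ≤ K)
    (s : Finset ℕ) : ‖∑ n ∈ s, dd W n • g n‖ ≤ s.card * (D * K) := by
  calc ‖∑ n ∈ s, dd W n • g n‖ ≤ ∑ n ∈ s, ‖dd W n • g n‖ := norm_sum_le _ _
    _ ≤ ∑ n ∈ s, D * K := by
        refine Finset.sum_le_sum (fun n _ => ?_)
        rw [norm_smul, Real.norm_eq_abs]
        have h1 := hD n; have h2 := hg n
        nlinarith [norm_nonneg (g n), abs_nonneg (dd W n)]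
    _ = s.card * (D * K) := by rw [Finset.sum_const]; simp

lemma shift_diff {E : Type*} [NormedAddCommGroup E] [NormedSpace ℝ E]
    (hD : ∀ n, |dd W n| ≤ D)
    (hanti : ∀ m n, N₀ ≤ m → m ≤ n → dd W n ≤ dd W m)
    (hpos : ∀ n, N₀ ≤ n → 0 ≤ dd W n)
    (g : ℕ → E) (K : ℝ) (hg : ∀ n, ‖g n‖ ≤ K) (hK : 0 ≤ K)
    (m M N : ℕ) (hM : N₀ ≤ M) (hMN : M ≤ N) :
    ‖∑ n ∈ Finset.Icc M N, dd W n • g (n + m) -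
      ∑ k ∈ Finset.Icc (M + m) (N + m), dd W k • g k‖ ≤ m * D * K := by
  rw [sum_Icc_shift, ← Finset.sum_sub_distrib]
  have key : ∀ n ∈ Finset.Icc M N, dd W n • g (n+m) - dd W (n+m) • g (n+m)
      = (dd W n - dd W (n+m)) • g (n+m) := by intro n _; rw [sub_smul]
  rw [Finset.sum_congr rfl key]
  calc ‖∑ n ∈ Finset.Icc M N, (dd W n - dd W (n+m)) • g (n+m)‖
      ≤ ∑ n ∈ Finset.Icc M N, ‖(dd W n - dd W (n+m)) • g (n+m)‖ := norm_sum_le _ _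
    _ ≤ ∑ n ∈ Finset.Icc M N, (dd W n - dd W (n+m)) * K := by
        refine Finset.sum_le_sum (fun n hn => ?_)
        simp only [Finset.mem_Icc] at hn
        have h1 : dd W (n+m) ≤ dd W n := hanti n (n+m) (by omega) (by omega)
        rw [norm_smul, Real.norm_eq_abs, abs_of_nonneg (by linarith)]
        have := hg (n+m)
        nlinarith [norm_nonneg (g (n+m))]
    _ = (∑ n ∈ Finset.Icc M N, dd W n - ∑ n ∈ Finset.Icc M N, dd W (n+m)) * K := by
        rw [← Finset.sum_sub_distrib, ← Finset.sum_mul]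
    _ ≤ m * D * K := by
        rw [← sum_Icc_shift (dd W) M N m, teleIcc W M N hMN, teleIcc W (M+m) (N+m) (by omega)]
        have h1 : |W (M + m) - W M| ≤ m * D := Wlip W D hD M m
        have h2 : W (N+1) ≤ W (N+1+m) := Wmono W N₀ hpos (by omega) (by omega)
        have h3 : N + m + 1 = N + 1 + m := by omega
        rw [h3]
        have habs := abs_le.mp h1
        nlinarith

lemma re_inner_comm {E : Type*} [NormedAddCommGroup E] [InnerProductSpace ℂ E] (a b : E) :
    (inner ℂ a b : ℂ).re = (inner ℂ b a : ℂ).re := by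
  rw [← inner_conj_symm b a, Complex.conj_re]

lemma re_inner_self {E : Type*} [NormedAddCommGroup E] [InnerProductSpace ℂ E] (a : E) :
    (inner ℂ a a : ℂ).re = ‖a‖ ^ 2 := by
  rw [← inner_self_eq_norm_sq (𝕜 := ℂ) a]; rfl

set_option maxHeartbeats 2000000 in
lemma core {E : Type*} [NormedAddCommGroup E] [InnerProductSpace ℂ E]
    (W : ℕ → ℝ) (N₀ : ℕ) (D C : ℝ) (hD0 : 0 ≤ D) (hC1 : 1 ≤ C)
    (hD : ∀ n, |dd W n| ≤ D)
    (hanti : ∀ m n, N₀ ≤ m → m ≤ n → dd W n ≤ dd W m)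
    (hpos : ∀ n, N₀ ≤ n → 0 ≤ dd W n)
    (f : ℕ → E) (hC : ∀ n, ‖f n‖ ≤ C)
    (hvdc : ∀ d : ℕ, 1 ≤ d → UWLim W (fun n => (inner ℂ (f (n + d)) (f n) : ℂ)) 0)
    (ε : ℝ) (hε : 0 < ε) :
    ∃ l : ℕ, ∀ M N : ℕ, N₀ ≤ M → M ≤ N → (l : ℝ) ≤ W N - W M →
      ‖(W N - W M)⁻¹ • ∑ n ∈ Finset.Icc M N, dd W n • f n‖ < ε := by
  have hC0 : (0:ℝ) < C := by linarith
  set ε₁ : ℝ := ε ^ 2 / 48 with hε₁def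
  have hε₁ : 0 < ε₁ := by positivity
  clear_value ε₁
  obtain ⟨H₀, hH₀⟩ := exists_nat_ge (48 * C ^ 2 / ε ^ 2)
  set H : ℕ := H₀ + 1 with hHdef
  have hH1 : (1:ℝ) ≤ (H:ℝ) := by exact_mod_cast Nat.one_le_iff_ne_zero.mpr (by omega)
  have hHbig : 48 * C ^ 2 ≤ (H:ℝ) * ε ^ 2 := by
    have h1 : (H₀:ℝ) ≤ (H:ℝ) := by exact_mod_cast Nat.le_succ H₀
    have h2 : 48 * C ^ 2 / ε ^ 2 ≤ (H:ℝ) := le_trans hH₀ h1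
    have h3 := (div_le_iff₀ (by positivity : (0:ℝ) < ε ^ 2)).mp h2
    linarith
  clear_value H
  have hld : ∀ d : ℕ, ∃ l : ℕ, 1 ≤ d → ∀ M N : ℕ, M ≤ N → (l : ℝ) ≤ W N - W M →
      ‖(W N - W M)⁻¹ • ∑ n ∈ Finset.Icc M N,
        dd W n • (inner ℂ (f (n + d)) (f n) : ℂ)‖ < ε₁ := by
    intro d
    by_cases hd : 1 ≤ d
    · obtain ⟨l, hl⟩ := hvdc d hd ε₁ hε₁
      exact ⟨l, fun _ M N h1 h2 => by simpa using hl M N h1 h2⟩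
    · exact ⟨0, fun h => absurd h hd⟩
  choose ld hldspec using hld
  set L₁ : ℕ := (Finset.range (H + 1)).sup ld with hL₁def
  have hL₁sup : ∀ d, d < H + 1 → ld d ≤ L₁ := fun d hd =>
    Finset.le_sup (Finset.mem_range.mpr hd)
  clear_value L₁
  obtain ⟨l₂, hl₂⟩ := exists_nat_ge
    (D + H * D + 24 * H * D * C ^ 2 / ε ^ 2 + 12 * H * D * C / ε)
  refine ⟨L₁ + l₂ + 1, ?_⟩
  intro M N hM hMN hLl
  set w : ℕ → ℝ := dd W with hwdef
  set L : ℝ := W N - W M with hLdef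
  clear_value L
  have c1 : (0:ℝ) ≤ D := hD0
  have c2 : (0:ℝ) ≤ (H:ℝ) * D := by positivity
  have c3 : (0:ℝ) ≤ 24 * H * D * C ^ 2 / ε ^ 2 := by positivity
  have c4 : (0:ℝ) ≤ 12 * H * D * C / ε := by positivity
  have hlsplit : (L₁ : ℝ) + (l₂ : ℝ) + 1 ≤ L := by
    push_cast at hLl; linarith
  have hL₁0 : (0:ℝ) ≤ (L₁:ℝ) := Nat.cast_nonneg _
  have hDL : D ≤ L := by linarith
  have hHDL : (H:ℝ) * D ≤ L := by linarith
  have h24 : 24 * H * D * C ^ 2 ≤ L * ε ^ 2 := by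
    have h1 : 24 * H * D * C ^ 2 / ε ^ 2 ≤ L := by linarith
    have := mul_le_mul_of_nonneg_right h1 (le_of_lt (by positivity : (0:ℝ) < ε ^ 2))
    rw [div_mul_cancel₀] at this
    · linarith
    · positivity
  have h12 : 12 * H * D * C ≤ L * ε := by
    have h1 : 12 * H * D * C / ε ≤ L := by linarith
    have := mul_le_mul_of_nonneg_right h1 (le_of_lt hε)
    rw [div_mul_cancel₀] at this
    · linarith
    · linarith
  have hwinlow : (L₁ : ℝ) + 1 ≤ L - H * D := by linarith
  have hL1 : (1:ℝ) ≤ L := by linarith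
  have hLpos : (0:ℝ) < L := by linarith
  have hwpos : ∀ n ∈ Finset.Icc M N, 0 ≤ w n :=
    fun n hn => hpos n (le_trans hM (Finset.mem_Icc.mp hn).1)
  -- the averaged vdc bound
  have hY : ∀ d m : ℕ, 1 ≤ d → d < H + 1 → m < H →
      ‖∑ n ∈ Finset.Icc M N, w n • (inner ℂ (f (n + m + d)) (f (n + m)) : ℂ)‖
        ≤ ε₁ * (L + H * D) + H * D * C ^ 2 := by
    intro d m hd hdH hm
    set g : ℕ → ℂ := fun k => (inner ℂ (f (k + d)) (f k) : ℂ) with hgdef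
    have hgK : ∀ k, ‖g k‖ ≤ C ^ 2 := by
      intro k
      calc ‖g k‖ ≤ ‖f (k + d)‖ * ‖f k‖ := norm_inner_le_norm _ _
        _ ≤ C ^ 2 := by nlinarith [hC (k + d), hC k, norm_nonneg (f k)]
    have hCsq : (0:ℝ) ≤ C ^ 2 := by positivity
    have h1 : ‖∑ n ∈ Finset.Icc M N, w n • g (n + m) -
        ∑ k ∈ Finset.Icc (M + m) (N + m), w k • g k‖ ≤ m * D * C ^ 2 :=
      shift_diff W N₀ D hD hanti hpos g (C ^ 2) hgK hCsq m M N hM hMN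
    have hWm1 : W N ≤ W (N + m) := Wmono W N₀ hpos (le_trans hM hMN) (by omega)
    have hWm2 := abs_le.mp (Wlip W D hD M m)
    have hWm3 := abs_le.mp (Wlip W D hD N m)
    have hWM : W M ≤ W (M + m) + m * D := by linarith [hWm2.1]
    have hmH : (m:ℝ) * D ≤ H * D := by
      have : (m:ℝ) ≤ (H:ℝ) := by exact_mod_cast le_of_lt hm
      nlinarith
    have hwin_lo : L - (H:ℝ) * D ≤ W (N + m) - W (M + m) := by
      have : W (M + m) ≤ W M + m * D := by linarith [hWm2.2]
      simp only [hLdef]; linarith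
    have hwin_hi : W (N + m) - W (M + m) ≤ L + H * D := by
      have h5 : W M ≤ W (M + m) := Wmono W N₀ hpos hM (by omega)
      have h6 : W (N + m) ≤ W N + m * D := by linarith [hWm3.2]
      simp only [hLdef]; linarith
    have hldle : (ld d : ℝ) ≤ (L₁ : ℝ) := by exact_mod_cast hL₁sup d hdH
    have hwin_ld : (ld d : ℝ) ≤ W (N + m) - W (M + m) := by linarith
    have happ := hldspec d hd (M + m) (N + m) (by omega) hwin_ld
    have hwinpos : (0:ℝ) < W (N + m) - W (M + m) := by linarith
    have hZ : ‖∑ k ∈ Finset.Icc (M + m) (N + m), w k • g k‖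
        ≤ ε₁ * (W (N + m) - W (M + m)) := by
      rw [norm_smul, Real.norm_eq_abs, abs_inv, abs_of_pos hwinpos] at happ
      have := (inv_mul_lt_iff₀ hwinpos).mp happ
      linarith [this]
    calc ‖∑ n ∈ Finset.Icc M N, w n • g (n + m)‖
        ≤ ‖∑ k ∈ Finset.Icc (M + m) (N + m), w k • g k‖ + m * D * C ^ 2 := by
          have := norm_sub_norm_le (∑ n ∈ Finset.Icc M N, w n • g (n + m))
            (∑ k ∈ Finset.Icc (M + m) (N + m), w k • g k)
          linarith
      _ ≤ ε₁ * (L + H * D) + H * D * C ^ 2 := by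
          have h7 : ε₁ * (W (N + m) - W (M + m)) ≤ ε₁ * (L + H * D) :=
            mul_le_mul_of_nonneg_left hwin_hi (le_of_lt hε₁)
          have h8 : (m:ℝ) * D * C ^ 2 ≤ (H:ℝ) * D * C ^ 2 := by nlinarith
          linarith
  -- main objects
  set S : E := ∑ n ∈ Finset.Icc M N, w n • f n with hSdef
  set B : ℕ → E := fun n => ∑ h ∈ Finset.range H, f (n + h) with hBdef
  set P : E := ∑ n ∈ Finset.Icc M N, w n • B n with hPdef
  set A : ℝ := ∑ n ∈ Finset.Icc M N, w n with hAdef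
  set Q : ℝ := ∑ n ∈ Finset.Icc M N, w n * ‖B n‖ ^ 2 with hQdef
  clear_value S B P A Q
  have hA0 : 0 ≤ A := by rw [hAdef]; exact Finset.sum_nonneg hwpos
  have hAeq : A = W (N + 1) - W M := by rw [hAdef, hwdef]; exact teleIcc W M N hMN
  have hAle : A ≤ L + D := by
    have h2 : w N ≤ D := (abs_le.mp (hD N)).2
    have h3 : w N = W (N + 1) - W N := by simp only [hwdef, dd]
    rw [hAeq, hLdef]; linarith
  have hA2L : A ≤ 2 * L := by linarith
  -- step 1 : comparison with shifted averages
  have hCpos : (0:ℝ) ≤ C := le_of_lt hC0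
  have hTS : ∀ h : ℕ, h < H → ‖(∑ n ∈ Finset.Icc M N, w n • f (n + h)) - S‖
      ≤ 3 * ((H:ℝ) * (D * C)) := by
    intro h hh
    have h1 : ‖(∑ n ∈ Finset.Icc M N, w n • f (n + h)) -
        ∑ k ∈ Finset.Icc (M + h) (N + h), w k • f k‖ ≤ h * D * C :=
      shift_diff W N₀ D hD hanti hpos f C hC hCpos h M N hM hMN
    have hdecomp : (∑ k ∈ Finset.Icc (M + h) (N + h), w k • f k) - S =
        (∑ k ∈ Finset.Ico (N + 1) (N + h + 1), w k • f k) -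
        ∑ k ∈ Finset.Ico M (M + h), w k • f k := by
      have e1 : ∑ k ∈ Finset.Icc (M + h) (N + h), w k • f k
          = ∑ k ∈ Finset.Ico (M + h) (N + h + 1), w k • f k := by
        rw [Finset.Ico_add_one_right_eq_Icc]
      have e2 : S = ∑ k ∈ Finset.Ico M (N + 1), w k • f k := by
        rw [hSdef, ← Finset.Ico_add_one_right_eq_Icc]
      have d1 := Finset.sum_Ico_consecutive (fun k => w k • f k)
        (show M ≤ M + h by omega) (show M + h ≤ N + h + 1 by omega)
      have d2 := Finset.sum_Ico_consecutive (fun k => w k • f k)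
        (show M ≤ N + 1 by omega) (show N + 1 ≤ N + h + 1 by omega)
      have h3 := d1.trans d2.symm
      rw [e1, e2]
      have h4 : ∑ k ∈ Finset.Ico (M + h) (N + h + 1), w k • f k
          = (∑ k ∈ Finset.Ico M (N + 1), w k • f k)
            + (∑ k ∈ Finset.Ico (N + 1) (N + h + 1), w k • f k)
            - ∑ k ∈ Finset.Ico M (M + h), w k • f k := by
        rw [← h3]; abel
      rw [h4]; abel
    have b1 := sum_bdd W D hD f C hC hCpos (Finset.Ico (N + 1) (N + h + 1))
    have b2 := sum_bdd W D hD f C hC hCpos (Finset.Ico M (M + h))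
    rw [Nat.card_Ico] at b1 b2
    have e5 : N + h + 1 - (N + 1) = h := by omega
    have e6 : M + h - M = h := by omega
    rw [e5] at b1; rw [e6] at b2
    have h7 : ‖(∑ k ∈ Finset.Icc (M + h) (N + h), w k • f k) - S‖ ≤ h * (D * C) + h * (D * C) := by
      rw [hdecomp]
      exact le_trans (norm_sub_le _ _) (by linarith)
    have h8 : ‖(∑ n ∈ Finset.Icc M N, w n • f (n + h)) - S‖
        ≤ h * D * C + (h * (D * C) + h * (D * C)) := by
      have := norm_sub_le ((∑ n ∈ Finset.Icc M N, w n • f (n + h)) -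
        ∑ k ∈ Finset.Icc (M + h) (N + h), w k • f k)
        (S - ∑ k ∈ Finset.Icc (M + h) (N + h), w k • f k)
      simp only [sub_sub_sub_cancel_right] at this
      have h9 : ‖S - ∑ k ∈ Finset.Icc (M + h) (N + h), w k • f k‖
          = ‖(∑ k ∈ Finset.Icc (M + h) (N + h), w k • f k) - S‖ := norm_sub_rev _ _
      linarith
    have hhH : (h:ℝ) ≤ (H:ℝ) := by exact_mod_cast le_of_lt hh
    have hdc : (h:ℝ) * (D * C) ≤ (H:ℝ) * (D * C) :=
      mul_le_mul_of_nonneg_right hhH (by positivity)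
    have hassoc : (h:ℝ) * D * C = (h:ℝ) * (D * C) := by ring
    linarith
  have hPS : ‖P - (H:ℝ) • S‖ ≤ (H:ℝ) * (3 * ((H:ℝ) * (D * C))) := by
    have e1 : P = ∑ h ∈ Finset.range H, ∑ n ∈ Finset.Icc M N, w n • f (n + h) := by
      rw [hPdef]
      simp only [hBdef]
      simp_rw [Finset.smul_sum]
      exact Finset.sum_comm
    have e2 : (H:ℝ) • S = ∑ _h ∈ Finset.range H, S := by
      rw [Finset.sum_const, Finset.card_range, ← Nat.cast_smul_eq_nsmul ℝ]
    rw [e1, e2, ← Finset.sum_sub_distrib]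
    calc ‖∑ h ∈ Finset.range H, ((∑ n ∈ Finset.Icc M N, w n • f (n + h)) - S)‖
        ≤ ∑ h ∈ Finset.range H, ‖(∑ n ∈ Finset.Icc M N, w n • f (n + h)) - S‖ :=
          norm_sum_le _ _
      _ ≤ ∑ _h ∈ Finset.range H, 3 * ((H:ℝ) * (D * C)) :=
          Finset.sum_le_sum fun h hh => hTS h (Finset.mem_range.mp hh)
      _ = (H:ℝ) * (3 * ((H:ℝ) * (D * C))) := by
          rw [Finset.sum_const, Finset.card_range, nsmul_eq_mul]
  -- step 2 : Cauchy-Schwarz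
  have hQ0 : 0 ≤ Q := by
    rw [hQdef]
    exact Finset.sum_nonneg fun n hn => mul_nonneg (hwpos n hn) (by positivity)
  have hPQ : ‖P‖ ^ 2 ≤ A * Q := by
    have h1 : ‖P‖ ≤ ∑ n ∈ Finset.Icc M N, w n * ‖B n‖ := by
      rw [hPdef]
      calc ‖∑ n ∈ Finset.Icc M N, w n • B n‖ ≤ ∑ n ∈ Finset.Icc M N, ‖w n • B n‖ := norm_sum_le _ _
        _ = ∑ n ∈ Finset.Icc M N, w n * ‖B n‖ := Finset.sum_congr rfl fun n hn => by
            rw [norm_smul, Real.norm_eq_abs, abs_of_nonneg (hwpos n hn)]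
    have h2 := Finset.sum_mul_sq_le_sq_mul_sq (Finset.Icc M N)
      (fun n => Real.sqrt (w n)) (fun n => Real.sqrt (w n) * ‖B n‖)
    have e1 : ∑ n ∈ Finset.Icc M N, Real.sqrt (w n) * (Real.sqrt (w n) * ‖B n‖)
        = ∑ n ∈ Finset.Icc M N, w n * ‖B n‖ := Finset.sum_congr rfl fun n hn => by
        rw [← mul_assoc, Real.mul_self_sqrt (hwpos n hn)]
    have e2 : ∑ n ∈ Finset.Icc M N, Real.sqrt (w n) ^ 2 = A := by
      rw [hAdef]
      exact Finset.sum_congr rfl fun n hn => Real.sq_sqrt (hwpos n hn)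
    have e3 : ∑ n ∈ Finset.Icc M N, (Real.sqrt (w n) * ‖B n‖) ^ 2 = Q := by
      rw [hQdef]
      exact Finset.sum_congr rfl fun n hn => by rw [mul_pow, Real.sq_sqrt (hwpos n hn)]
    rw [e1, e2, e3] at h2
    have h3 : ‖P‖ ^ 2 ≤ (∑ n ∈ Finset.Icc M N, w n * ‖B n‖) ^ 2 :=
      pow_le_pow_left₀ (norm_nonneg P) h1 2
    linarith
  -- step 3 : expansion of Q
  set X : ℕ → ℕ → ℂ := fun h' h => ∑ n ∈ Finset.Icc M N,
      w n • (inner ℂ (f (n + h')) (f (n + h)) : ℂ) with hXdef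
  clear_value X
  have hXre : ∀ h' h : ℕ, (X h' h).re
      = ∑ n ∈ Finset.Icc M N, w n * (inner ℂ (f (n + h')) (f (n + h)) : ℂ).re := by
    intro h' h
    simp only [hXdef]
    rw [Complex.re_sum]
    exact Finset.sum_congr rfl fun n _ => by rw [Complex.smul_re, smul_eq_mul]
  have hQexp : Q = ∑ h' ∈ Finset.range H, ∑ h ∈ Finset.range H, (X h' h).re := by
    have e1 : ∀ n, w n * ‖B n‖ ^ 2 = ∑ h' ∈ Finset.range H, ∑ h ∈ Finset.range H,
        w n * (inner ℂ (f (n + h')) (f (n + h)) : ℂ).re := by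
      intro n
      have hb : ‖B n‖ ^ 2 = (inner ℂ (B n) (B n) : ℂ).re := (re_inner_self (B n)).symm
      have hbb : (inner ℂ (B n) (B n) : ℂ) = ∑ h' ∈ Finset.range H, ∑ h ∈ Finset.range H,
          (inner ℂ (f (n + h')) (f (n + h)) : ℂ) := by
        simp only [hBdef]
        rw [sum_inner]
        exact Finset.sum_congr rfl fun h' _ => by rw [inner_sum]
      rw [hb, hbb, Complex.re_sum, Finset.mul_sum]
      exact Finset.sum_congr rfl fun h' _ => by rw [Complex.re_sum, Finset.mul_sum]
    calc Q = ∑ n ∈ Finset.Icc M N, ∑ h' ∈ Finset.range H, ∑ h ∈ Finset.range H,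
          w n * (inner ℂ (f (n + h')) (f (n + h)) : ℂ).re := by
          rw [hQdef]; exact Finset.sum_congr rfl fun n _ => e1 n
      _ = ∑ h' ∈ Finset.range H, ∑ n ∈ Finset.Icc M N, ∑ h ∈ Finset.range H,
          w n * (inner ℂ (f (n + h')) (f (n + h)) : ℂ).re := Finset.sum_comm
      _ = ∑ h' ∈ Finset.range H, ∑ h ∈ Finset.range H, ∑ n ∈ Finset.Icc M N,
          w n * (inner ℂ (f (n + h')) (f (n + h)) : ℂ).re :=
          Finset.sum_congr rfl fun h' _ => Finset.sum_comm
      _ = ∑ h' ∈ Finset.range H, ∑ h ∈ Finset.range H, (X h' h).re :=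
          Finset.sum_congr rfl fun h' _ => Finset.sum_congr rfl fun h _ => (hXre h' h).symm
  set E₂ : ℝ := ε₁ * (L + (H:ℝ) * D) + (H:ℝ) * D * C ^ 2 with hE₂def
  clear_value E₂
  have hE₂0 : 0 ≤ E₂ := by
    have u1 : (0:ℝ) ≤ ε₁ * (L + (H:ℝ) * D) := mul_nonneg (le_of_lt hε₁) (by linarith)
    have u2 : (0:ℝ) ≤ (H:ℝ) * D * C ^ 2 := by positivity
    rw [hE₂def]; linarith
  have hdiag : ∀ h : ℕ, (X h h).re ≤ A * C ^ 2 := by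
    intro h
    rw [hXre]
    calc ∑ n ∈ Finset.Icc M N, w n * (inner ℂ (f (n + h)) (f (n + h)) : ℂ).re
        ≤ ∑ n ∈ Finset.Icc M N, w n * C ^ 2 := Finset.sum_le_sum fun n hn => by
          rw [re_inner_self]
          have u4 : ‖f (n + h)‖ ^ 2 ≤ C ^ 2 :=
            pow_le_pow_left₀ (norm_nonneg (f (n + h))) (hC (n + h)) 2
          exact mul_le_mul_of_nonneg_left u4 (hwpos n hn)
      _ = A * C ^ 2 := by rw [← Finset.sum_mul, ← hAdef]
  have hoff : ∀ h' h : ℕ, h' < H → h < H → h' ≠ h → (X h' h).re ≤ E₂ := by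
    intro h' h hh' hh hne
    have main : ∀ m d : ℕ, 1 ≤ d → d < H + 1 → m < H →
        (∑ n ∈ Finset.Icc M N, w n • (inner ℂ (f (n + m + d)) (f (n + m)) : ℂ)).re ≤ E₂ := by
      intro m d hd hdH hm
      have u1 := hY d m hd hdH hm
      have u2 : (∑ n ∈ Finset.Icc M N, w n • (inner ℂ (f (n + m + d)) (f (n + m)) : ℂ)).re
          ≤ ‖∑ n ∈ Finset.Icc M N, w n • (inner ℂ (f (n + m + d)) (f (n + m)) : ℂ)‖ := by
        exact Complex.re_le_norm _
      linarith
    rcases Nat.lt_or_ge h' h with hlt | hge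
    · have e : (X h' h).re = (∑ n ∈ Finset.Icc M N,
          w n • (inner ℂ (f (n + h' + (h - h'))) (f (n + h')) : ℂ)).re := by
        rw [hXre, Complex.re_sum]
        refine Finset.sum_congr rfl fun n _ => ?_
        rw [Complex.smul_re, smul_eq_mul]
        have e2 : n + h' + (h - h') = n + h := by omega
        rw [e2]
        exact congrArg _ (re_inner_comm _ _)
      rw [e]; exact main h' (h - h') (by omega) (by omega) hh'
    · have hlt2 : h < h' := by omega
      have e : (X h' h) = ∑ n ∈ Finset.Icc M N,
          w n • (inner ℂ (f (n + h + (h' - h))) (f (n + h)) : ℂ) := by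
        simp only [hXdef]
        refine Finset.sum_congr rfl fun n _ => ?_
        have e2 : n + h + (h' - h) = n + h' := by omega
        rw [e2]
      rw [e]; exact main h (h' - h) (by omega) (by omega) hh
  have hac : 0 ≤ A * C ^ 2 := mul_nonneg hA0 (by positivity)
  have hQb : Q ≤ (H:ℝ) * ((H:ℝ) * E₂ + A * C ^ 2) := by
    rw [hQexp]
    calc ∑ h' ∈ Finset.range H, ∑ h ∈ Finset.range H, (X h' h).re
        ≤ ∑ h' ∈ Finset.range H, ∑ h ∈ Finset.range H,
            (E₂ + if h' = h then A * C ^ 2 else 0) := by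
          refine Finset.sum_le_sum fun h' hh' => Finset.sum_le_sum fun h hh => ?_
          by_cases he : h' = h
          · subst he; rw [if_pos rfl]; linarith [hdiag h']
          · simp only [if_neg he]
            have := hoff h' h (Finset.mem_range.mp hh') (Finset.mem_range.mp hh) he
            linarith
      _ = ∑ h' ∈ Finset.range H, ((H:ℝ) * E₂ + if h' ∈ Finset.range H then A * C ^ 2 else 0) := by
          refine Finset.sum_congr rfl fun h' hh' => ?_
          rw [Finset.sum_add_distrib, Finset.sum_const, Finset.card_range, nsmul_eq_mul,
            Finset.sum_ite_eq]
      _ ≤ ∑ h' ∈ Finset.range H, ((H:ℝ) * E₂ + A * C ^ 2) := by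
          refine Finset.sum_le_sum fun h' hh' => ?_
          rw [if_pos hh']
      _ = (H:ℝ) * ((H:ℝ) * E₂ + A * C ^ 2) := by
          rw [Finset.sum_const, Finset.card_range, nsmul_eq_mul]
  -- final arithmetic
  have hE₂L : E₂ ≤ L * ε ^ 2 / 12 := by
    rw [hE₂def, hε₁def]
    have u1 : L + (H:ℝ) * D ≤ 2 * L := by linarith
    have u2 : ε ^ 2 / 48 * (L + (H:ℝ) * D) ≤ ε ^ 2 / 48 * (2 * L) :=
      mul_le_mul_of_nonneg_left u1 (by positivity)
    have u3 : (H:ℝ) * D * C ^ 2 ≤ L * ε ^ 2 / 24 := by linarith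
    have u4 : ε ^ 2 / 48 * (2 * L) = L * ε ^ 2 / 24 := by ring
    linarith
  have hs1 : A * C ^ 2 ≤ 2 * L * C ^ 2 := mul_le_mul_of_nonneg_right hA2L (sq_nonneg C)
  have hs2 : 2 * L * C ^ 2 ≤ (H:ℝ) * (L * ε ^ 2 / 24) := by
    linarith [mul_le_mul_of_nonneg_left hHbig (le_of_lt hLpos)]
  have hs3 : (H:ℝ) * E₂ ≤ (H:ℝ) * (L * ε ^ 2 / 12) :=
    mul_le_mul_of_nonneg_left hE₂L (by linarith)
  have hs4 : (H:ℝ) * E₂ + A * C ^ 2 ≤ (H:ℝ) * (L * ε ^ 2 / 12) + (H:ℝ) * (L * ε ^ 2 / 24) := by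
    linarith
  have hQ4 : Q ≤ (H:ℝ) * (H:ℝ) * L * ε ^ 2 / 8 := by
    have u5 : Q ≤ (H:ℝ) * ((H:ℝ) * (L * ε ^ 2 / 12) + (H:ℝ) * (L * ε ^ 2 / 24)) :=
      le_trans hQb (mul_le_mul_of_nonneg_left hs4 (by linarith))
    have u6 : (H:ℝ) * ((H:ℝ) * (L * ε ^ 2 / 12) + (H:ℝ) * (L * ε ^ 2 / 24))
        = (H:ℝ) * (H:ℝ) * L * ε ^ 2 / 8 := by ring
    linarith
  have hAQ : A * Q ≤ ((H:ℝ) * L * (ε / 2)) ^ 2 := by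
    have u7 : A * Q ≤ 2 * L * Q := mul_le_mul_of_nonneg_right hA2L hQ0
    have u8 : 2 * L * Q ≤ 2 * L * ((H:ℝ) * (H:ℝ) * L * ε ^ 2 / 8) :=
      mul_le_mul_of_nonneg_left hQ4 (by linarith)
    have u9 : 2 * L * ((H:ℝ) * (H:ℝ) * L * ε ^ 2 / 8) = ((H:ℝ) * L * (ε / 2)) ^ 2 := by ring
    linarith
  have hPle : ‖P‖ ≤ (H:ℝ) * L * (ε / 2) :=
    le_of_pow_le_pow_left₀ two_ne_zero (by positivity) (le_trans hPQ hAQ)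
  have hSle : ‖S‖ ≤ L * (3 * ε / 4) := by
    have u10 : ‖(H:ℝ) • S‖ ≤ ‖P‖ + ‖P - (H:ℝ) • S‖ := by
      have := norm_sub_le P (P - (H:ℝ) • S)
      simpa using this
    have u11 : ‖(H:ℝ) • S‖ = (H:ℝ) * ‖S‖ := by
      rw [norm_smul, Real.norm_eq_abs, abs_of_nonneg (by linarith)]
    have u13 : 3 * ((H:ℝ) * (D * C)) ≤ L * (ε / 4) := by linarith [h12]
    have u14 : (H:ℝ) * ‖S‖ ≤ (H:ℝ) * L * (ε / 2) + (H:ℝ) * (3 * ((H:ℝ) * (D * C))) := by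
      rw [← u11]; linarith
    have u15 : (H:ℝ) * (3 * ((H:ℝ) * (D * C))) ≤ (H:ℝ) * (L * (ε / 4)) :=
      mul_le_mul_of_nonneg_left u13 (by linarith)
    have u16 : (H:ℝ) * ‖S‖ ≤ (H:ℝ) * (L * (3 * ε / 4)) := by
      have u17 : (H:ℝ) * L * (ε / 2) + (H:ℝ) * (L * (ε / 4)) = (H:ℝ) * (L * (3 * ε / 4)) := by
        ring
      linarith
    exact le_of_mul_le_mul_left u16 (by linarith)
  rw [norm_smul, Real.norm_eq_abs, abs_inv, abs_of_pos hLpos]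
  calc L⁻¹ * ‖S‖ ≤ L⁻¹ * (L * (3 * ε / 4)) :=
        mul_le_mul_of_nonneg_left hSle (inv_nonneg.mpr (le_of_lt hLpos))
    _ = 3 * ε / 4 := by field_simp
    _ < ε := by linarith

lemma Wlip' (W : ℕ → ℝ) (D : ℝ) (hD : ∀ n, |dd W n| ≤ D) {a b : ℕ} (hab : a ≤ b) :
    |W b - W a| ≤ ((b - a : ℕ) : ℝ) * D := by
  have := Wlip W D hD a (b - a)
  rw [show a + (b - a) = b by omega] at this
  exact this

lemma degenerate {E : Type*} [NormedAddCommGroup E] [NormedSpace ℝ E]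
    (W : ℕ → ℝ) (N₀ : ℕ) (D : ℝ) (hD : ∀ n, |dd W n| ≤ D) (hD0 : 0 ≤ D)
    (hneg : ∀ n, N₀ ≤ n → dd W n ≤ 0) (f : ℕ → E) : UWLim W f 0 := by
  intro ε hε
  obtain ⟨l, hl⟩ := exists_nat_ge ((N₀ : ℝ) * D)
  refine ⟨l + 1, fun M N hMN hL => absurd hL (not_le.mpr ?_)⟩
  have key : W N - W M ≤ (N₀ : ℝ) * D := by
    set K := min (max M N₀) N with hK
    have hMK : M ≤ K := by omega
    have hKN : K ≤ N := by omega
    have h1 : W K - W M ≤ (N₀ : ℝ) * D := by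
      have h2 := (abs_le.mp (Wlip' W D hD hMK)).2
      have hcard : ((K - M : ℕ) : ℝ) ≤ (N₀ : ℝ) := by exact_mod_cast (by omega : K - M ≤ N₀)
      have h3 : ((K - M : ℕ) : ℝ) * D ≤ (N₀ : ℝ) * D := mul_le_mul_of_nonneg_right hcard hD0
      linarith
    have h2 : W N - W K ≤ 0 := by
      rw [← tele W K N hKN]
      refine Finset.sum_nonpos fun n hn => hneg n ?_
      simp only [Finset.mem_Ico] at hn
      omega
    linarith
  push_cast
  linarith

lemma glue {E : Type*} [NormedAddCommGroup E] [InnerProductSpace ℂ E]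
    (W : ℕ → ℝ) (N₀ : ℕ) (D C : ℝ) (f : ℕ → E) (hD0 : 0 ≤ D) (hC1 : 1 ≤ C)
    (hD : ∀ n, |dd W n| ≤ D)
    (hanti : ∀ m n, N₀ ≤ m → m ≤ n → dd W n ≤ dd W m)
    (hposw : ∀ n, N₀ ≤ n → 0 ≤ dd W n)
    (hC : ∀ n, ‖f n‖ ≤ C)
    (hvdc : ∀ d : ℕ, 1 ≤ d → UWLim W (fun n => (inner ℂ (f (n + d)) (f n) : ℂ)) 0) :
    UWLim W f 0 := by
  intro ε hε
  obtain ⟨l₀, hl₀⟩ := core W N₀ D C hD0 hC1 hD hanti hposw f hC hvdc (ε / 2) (by linarith)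
  obtain ⟨l₂, hl₂⟩ := exists_nat_ge
    ((N₀ : ℝ) * D + (2 * (N₀ : ℝ) * D * C + (N₀ : ℝ) * D * ε) / ε)
  refine ⟨l₀ + l₂ + 1, fun M N hMN hL => ?_⟩
  rw [sub_zero]
  have hcast : (l₀ : ℝ) + (l₂ : ℝ) + 1 ≤ W N - W M := by push_cast at hL; linarith
  have hND : (0:ℝ) ≤ (N₀ : ℝ) * D := by positivity
  have hKc0 : (0:ℝ) ≤ (2 * (N₀ : ℝ) * D * C + (N₀ : ℝ) * D * ε) / ε := by positivity
  have hl0nn : (0:ℝ) ≤ (l₀ : ℝ) := Nat.cast_nonneg _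
  have hLpos : 0 < W N - W M := by linarith
  by_cases hM : N₀ ≤ M
  · exact lt_trans (hl₀ M N hM hMN (by linarith)) (by linarith)
  · push_neg at hM
    have hNN₀ : N₀ ≤ N := by
      by_contra hN
      push_neg at hN
      have h1 := (abs_le.mp (Wlip' W D hD hMN)).2
      have hcard : ((N - M : ℕ) : ℝ) ≤ (N₀ : ℝ) := by exact_mod_cast (by omega : N - M ≤ N₀)
      have h2 : ((N - M : ℕ) : ℝ) * D ≤ (N₀ : ℝ) * D := mul_le_mul_of_nonneg_right hcard hD0
      linarith
    have hW₀ := abs_le.mp (Wlip' W D hD (le_of_lt hM))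
    have hcard₀ : ((N₀ - M : ℕ) : ℝ) ≤ (N₀ : ℝ) := by exact_mod_cast (by omega : N₀ - M ≤ N₀)
    have hc₀ : ((N₀ - M : ℕ) : ℝ) * D ≤ (N₀ : ℝ) * D := mul_le_mul_of_nonneg_right hcard₀ hD0
    have hWN₀hi : W N₀ - W M ≤ (N₀ : ℝ) * D := by linarith [hW₀.2]
    have hWN₀lo : -((N₀ : ℝ) * D) ≤ W N₀ - W M := by
      have h5 : -(((N₀ - M : ℕ) : ℝ) * D) ≤ W N₀ - W M := by linarith [hW₀.1]
      linarith
    have hsplit : ∑ n ∈ Finset.Icc M N, dd W n • f n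
        = (∑ n ∈ Finset.Ico M N₀, dd W n • f n) + ∑ n ∈ Finset.Icc N₀ N, dd W n • f n := by
      rw [← Finset.Ico_add_one_right_eq_Icc, ← Finset.Ico_add_one_right_eq_Icc]
      exact (Finset.sum_Ico_consecutive _ (by omega) (by omega)).symm
    have hS₀ : ‖∑ n ∈ Finset.Ico M N₀, dd W n • f n‖ ≤ (N₀ : ℝ) * (D * C) := by
      have h6 := sum_bdd W D hD f C hC (by linarith) (Finset.Ico M N₀)
      rw [Nat.card_Ico] at h6
      have h7 : ((N₀ - M : ℕ) : ℝ) * (D * C) ≤ (N₀ : ℝ) * (D * C) :=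
        mul_le_mul_of_nonneg_right hcard₀ (by positivity)
      linarith
    have hl₂ND : (N₀ : ℝ) * D ≤ (l₂ : ℝ) := by linarith
    have hL' : (l₀ : ℝ) + 1 ≤ W N - W N₀ := by linarith
    have hL'pos : 0 < W N - W N₀ := by linarith
    have hmain := hl₀ N₀ N (le_refl N₀) hNN₀ (by linarith)
    have hS' : ‖∑ n ∈ Finset.Icc N₀ N, dd W n • f n‖ < (W N - W N₀) * (ε / 2) := by
      rw [norm_smul, Real.norm_eq_abs, abs_inv, abs_of_pos hL'pos] at hmain
      have h8 := (inv_mul_lt_iff₀ hL'pos).mp hmain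
      linarith
    have hnorm : ‖∑ n ∈ Finset.Icc M N, dd W n • f n‖
        < (N₀ : ℝ) * (D * C) + (W N - W N₀) * (ε / 2) := by
      rw [hsplit]
      have h9 := norm_add_le (∑ n ∈ Finset.Ico M N₀, dd W n • f n)
        (∑ n ∈ Finset.Icc N₀ N, dd W n • f n)
      linarith
    -- final numeric assembly
    have hKc : (2 * (N₀ : ℝ) * D * C + (N₀ : ℝ) * D * ε) ≤ (W N - W M) * ε := by
      have h10 : (2 * (N₀ : ℝ) * D * C + (N₀ : ℝ) * D * ε) / ε ≤ W N - W M := by linarith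
      have h11 := mul_le_mul_of_nonneg_right h10 (le_of_lt hε)
      rw [div_mul_cancel₀] at h11
      · exact h11
      · linarith
    have hyx : W N - W N₀ ≤ (W N - W M) + (N₀ : ℝ) * D := by linarith
    have h12 : (W N - W N₀) * (ε / 2) ≤ ((W N - W M) + (N₀ : ℝ) * D) * (ε / 2) :=
      mul_le_mul_of_nonneg_right hyx (by linarith)
    have h13 : ((W N - W M) + (N₀ : ℝ) * D) * (ε / 2)
        = (W N - W M) * (ε / 2) + (N₀ : ℝ) * D * (ε / 2) := by ring
    have hfin : ‖∑ n ∈ Finset.Icc M N, dd W n • f n‖ < (W N - W M) * ε := by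
      have h14 : (N₀:ℝ) * (D * C) + (N₀ : ℝ) * D * (ε / 2) ≤ (W N - W M) * (ε / 2) := by
        have h15 : (N₀:ℝ) * (D * C) = (2 * (N₀ : ℝ) * D * C) / 2 := by ring
        have h16 : (N₀ : ℝ) * D * (ε / 2) = ((N₀ : ℝ) * D * ε) / 2 := by ring
        linarith
      have h17 : (W N - W M) * (ε / 2) + (W N - W M) * (ε / 2) = (W N - W M) * ε := by ring
      linarith
    rw [norm_smul, Real.norm_eq_abs, abs_inv, abs_of_pos hLpos]
    exact (inv_mul_lt_iff₀ hLpos).mpr (by linarith)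

lemma bound_of_tendsto (w : ℕ → ℝ) (h : Tendsto w atTop (nhds 0)) :
    ∃ D : ℝ, 0 ≤ D ∧ ∀ n, |w n| ≤ D := by
  obtain ⟨N₁, hN₁⟩ := (Metric.tendsto_atTop.mp h) 1 one_pos
  refine ⟨1 + ∑ k ∈ Finset.range N₁, |w k|, by positivity, fun n => ?_⟩
  by_cases hn : n < N₁
  · have h1 : |w n| ≤ ∑ k ∈ Finset.range N₁, |w k| :=
      Finset.single_le_sum (fun k _ => abs_nonneg (w k)) (Finset.mem_range.mpr hn)
    linarith
  · have h2 := hN₁ n (by omega)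
    rw [Real.dist_eq, sub_zero] at h2
    have h3 : (0:ℝ) ≤ ∑ k ∈ Finset.range N₁, |w k| := Finset.sum_nonneg fun k _ => abs_nonneg _
    linarith

lemma sign_of_mono_tendsto (w : ℕ → ℝ) (N₀ : ℕ)
    (hmono : ∀ m n, N₀ ≤ m → m ≤ n → w m ≤ w n)
    (h : Tendsto w atTop (nhds 0)) : ∀ n, N₀ ≤ n → w n ≤ 0 := by
  intro n hn
  by_contra hc
  push_neg at hc
  obtain ⟨N₁, hN₁⟩ := (Metric.tendsto_atTop.mp h) (w n) hc
  have h1 := hmono n (max n N₁) hn (le_max_left _ _)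
  have h2 := hN₁ (max n N₁) (le_max_right _ _)
  rw [Real.dist_eq, sub_zero] at h2
  have h3 := (abs_lt.mp h2).2
  linarith


/-- Van der Corput lemma for uniform Riesz means in a Hilbert space. -/
theorem stmt9 {H : Type*} [NormedAddCommGroup H] [InnerProductSpace ℂ H] [CompleteSpace H]
    (W : ℕ → ℝ) (hW : MemF 1 W) (f : ℕ → H) (hbd : ∃ C : ℝ, ∀ n, ‖f n‖ ≤ C)
    (hvdc : ∀ d : ℕ, 1 ≤ d → UWLim W (fun n => (inner ℂ (f (n + d)) (f n) : ℂ)) 0) :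
    UWLim W f 0 := by
  obtain ⟨C₀, hC₀⟩ := hbd
  have hC : ∀ n, ‖f n‖ ≤ max C₀ 1 := fun n => le_trans (hC₀ n) (le_max_left _ _)
  have hC1 : (1:ℝ) ≤ max C₀ 1 := le_max_right _ _
  have hW' : MemF 0 (dd W) := hW
  obtain ⟨⟨N₀, hmono⟩, htend, -⟩ := hW'
  obtain ⟨D, hD0, hD⟩ := bound_of_tendsto (dd W) htend
  rcases hmono with hinc | hdec
  · exact degenerate W N₀ D hD hD0 (sign_of_mono_tendsto (dd W) N₀ hinc htend) f
  · have hposw : ∀ n, N₀ ≤ n → 0 ≤ dd W n := by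
      have h1 := sign_of_mono_tendsto (fun n => -dd W n) N₀
        (fun m n hm hmn => neg_le_neg (hdec m n hm hmn)) (by simpa using htend.neg)
      intro n hn
      have := h1 n hn
      linarith
    exact glue W N₀ D (max C₀ 1) f hD0 hC1 hD hdec hposw hC hvdc
end core
end
end

section
/- Let π : ℝ → 𝕋 := ℝ/ℤ be the canonical quotient map and let W ∈ F₁. Then the sequence n ↦ π(W(n)) is well distributed on 𝕋 (with respect to the normalized Haar measure on 𝕋) with respect to the uniform Riesz mean UW. -/
open Filter MeasureTheory Finset
open scoped ENNReal Classical

noncomputable section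

open Real

lemma tele_Ico {E : Type*} [AddCommGroup E] (f : ℕ → E) {M N : ℕ} (h : M ≤ N) :
    ∑ n ∈ Finset.Ico M N, (f (n+1) - f n) = f N - f M := by
  induction N, h using Nat.le_induction with
  | base => simp
  | succ N hMN ih =>
      rw [Finset.sum_Ico_succ_top (by omega), ih]; abel

lemma tele_Icc {E : Type*} [AddCommGroup E] (f : ℕ → E) {M N : ℕ} (h : M ≤ N) :
    ∑ n ∈ Finset.Icc M N, (f (n+1) - f n) = f (N+1) - f M := by
  rw [← Finset.Ico_add_one_right_eq_Icc]; exact tele_Ico f (by omega)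

lemma sum_dd_Icc (W : ℕ → ℝ) {M N : ℕ} (h : M ≤ N) :
    ∑ n ∈ Finset.Icc M N, dd W n = W (N+1) - W M := tele_Icc W h

lemma sum_dd_Ico (W : ℕ → ℝ) {M N : ℕ} (h : M ≤ N) :
    ∑ n ∈ Finset.Ico M N, dd W n = W N - W M := tele_Ico W h

lemma uwlim_add {W : ℕ → ℝ} {a b : ℕ → ℂ} {L L' : ℂ} (ha : UWLim W a L) (hb : UWLim W b L') :
    UWLim W (fun n => a n + b n) (L + L') := by
  intro ε hε
  obtain ⟨l₁, h₁⟩ := ha (ε/2) (by linarith)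
  obtain ⟨l₂, h₂⟩ := hb (ε/2) (by linarith)
  refine ⟨max l₁ l₂, fun M N hMN hl => ?_⟩
  have e1 := h₁ M N hMN (le_trans (by exact_mod_cast Nat.cast_le.mpr (le_max_left l₁ l₂)) hl)
  have e2 := h₂ M N hMN (le_trans (by exact_mod_cast Nat.cast_le.mpr (le_max_right l₁ l₂)) hl)
  have hsum : ∑ n ∈ Finset.Icc M N, dd W n • (a n + b n)
      = (∑ n ∈ Finset.Icc M N, dd W n • a n) + ∑ n ∈ Finset.Icc M N, dd W n • b n := by
    simp [smul_add, Finset.sum_add_distrib]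
  calc ‖(W N - W M)⁻¹ • ∑ n ∈ Finset.Icc M N, dd W n • (a n + b n) - (L + L')‖
      = ‖((W N - W M)⁻¹ • ∑ n ∈ Finset.Icc M N, dd W n • a n - L)
        + ((W N - W M)⁻¹ • ∑ n ∈ Finset.Icc M N, dd W n • b n - L')‖ := by
        rw [hsum, smul_add]; ring_nf
    _ ≤ _ + _ := norm_add_le _ _
    _ < ε/2 + ε/2 := add_lt_add e1 e2
    _ = ε := by ring

lemma uwlim_smul {W : ℕ → ℝ} {a : ℕ → ℂ} {L : ℂ} (c : ℂ) (ha : UWLim W a L) :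
    UWLim W (fun n => c • a n) (c • L) := by
  intro ε hε
  have hc1 : (0:ℝ) < ‖c‖ + 1 := by positivity
  obtain ⟨l, h⟩ := ha (ε/(‖c‖+1)) (by positivity)
  refine ⟨l, fun M N hMN hl => ?_⟩
  have e := h M N hMN hl
  have key : (W N - W M)⁻¹ • (∑ n ∈ Finset.Icc M N, dd W n • (c • a n)) - c • L
      = c • ((W N - W M)⁻¹ • (∑ n ∈ Finset.Icc M N, dd W n • a n) - L) := by
    rw [smul_sub]
    congr 1
    rw [smul_comm]
    congr 1
    rw [Finset.smul_sum]
    exact Finset.sum_congr rfl fun n _ => (smul_comm c (dd W n) (a n)).symm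
  rw [key, norm_smul]
  calc ‖c‖ * ‖(W N - W M)⁻¹ • (∑ n ∈ Finset.Icc M N, dd W n • a n) - L‖
      ≤ (‖c‖+1) * ‖(W N - W M)⁻¹ • (∑ n ∈ Finset.Icc M N, dd W n • a n) - L‖ := by
        apply mul_le_mul_of_nonneg_right (by linarith) (norm_nonneg _)
    _ < (‖c‖+1) * (ε/(‖c‖+1)) := by exact mul_lt_mul_of_pos_left e hc1
    _ = ε := by field_simp

lemma uwlim_zero (W : ℕ → ℝ) : UWLim W (fun _ => (0:ℂ)) 0 := by
  intro ε hε
  exact ⟨0, fun M N _ _ => by simpa using hε⟩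

lemma uwlim_one {W : ℕ → ℝ} {C : ℝ} (hC : ∀ n, |dd W n| ≤ C) :
    UWLim W (fun _ => (1:ℂ)) 1 := by
  intro ε hε
  have hC0 : 0 ≤ C := le_trans (abs_nonneg _) (hC 0)
  refine ⟨⌈C/ε⌉₊ + 1, fun M N hMN hl => ?_⟩
  have hceil : C/ε < ((⌈C/ε⌉₊ + 1 : ℕ) : ℝ) := by
    push_cast
    exact lt_of_le_of_lt (Nat.le_ceil _) (by linarith)
  have hrC : C / ε < W N - W M := lt_of_lt_of_le hceil hl
  have hr : (0:ℝ) < W N - W M := lt_of_lt_of_le (by positivity) hl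
  have hs : ∑ n ∈ Finset.Icc M N, dd W n • (1:ℂ) = ((W (N+1) - W M : ℝ) : ℂ) := by
    rw [← sum_dd_Icc W hMN]
    push_cast
    exact Finset.sum_congr rfl fun n _ => by rw [Complex.real_smul, mul_one]
  rw [hs]
  have hWd : W (N+1) - W M = (W N - W M) + dd W N := by simp [dd]
  have hne : ((W N : ℂ) - W M) ≠ 0 := by
    have : (W N - W M : ℝ) ≠ 0 := ne_of_gt hr
    exact_mod_cast this
  have : (W N - W M)⁻¹ • ((W (N+1) - W M : ℝ) : ℂ) - 1
      = (((W N - W M)⁻¹ * dd W N : ℝ) : ℂ) := by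
    rw [hWd]
    push_cast [Complex.real_smul]
    field_simp
    ring
  rw [this, Complex.norm_real, Real.norm_eq_abs, abs_mul, abs_of_pos (inv_pos.mpr hr)]
  calc (W N - W M)⁻¹ * |dd W N| ≤ (W N - W M)⁻¹ * C := by
        exact mul_le_mul_of_nonneg_left (hC N) (le_of_lt (inv_pos.mpr hr))
    _ < ε := by
        rw [inv_mul_lt_iff₀ hr]
        rw [div_lt_iff₀ hε] at hrC
        linarith

lemma uwlim_approx {W : ℕ → ℝ} {B : ℝ}
    (hB : ∀ M N : ℕ, M ≤ N → (0:ℝ) ≤ W N - W M →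
      ∑ n ∈ Finset.Icc M N, |dd W n| ≤ (W N - W M) + B)
    {a : ℕ → ℂ} {L : ℂ}
    (h : ∀ ε : ℝ, 0 < ε → ∃ b : ℕ → ℂ, ∃ L' : ℂ,
      (∀ n, ‖a n - b n‖ ≤ ε) ∧ ‖L - L'‖ ≤ ε ∧ UWLim W b L') :
    UWLim W a L := by
  intro ε hε
  obtain ⟨b, L', hab, hLL, hb⟩ := h (ε/8) (by linarith)
  obtain ⟨l', hl'⟩ := hb (ε/4) (by linarith)
  refine ⟨max l' (max 1 ⌈B⌉₊), fun M N hMN hl => ?_⟩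
  have hcast1 : ((max l' (max 1 ⌈B⌉₊) : ℕ) : ℝ) ≤ W N - W M := hl
  have hr1 : (1:ℝ) ≤ W N - W M := by
    refine le_trans ?_ hcast1
    exact_mod_cast le_max_of_le_right (le_max_left _ _)
  have hr : (0:ℝ) < W N - W M := lt_of_lt_of_le one_pos hr1
  have hrB : B ≤ W N - W M := by
    refine le_trans (Nat.le_ceil B) (le_trans ?_ hcast1)
    exact_mod_cast le_max_of_le_right (le_max_right _ _)
  have e2 := hl' M N hMN (le_trans (by exact_mod_cast Nat.cast_le.mpr (le_max_left _ _)) hl)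
  set r := W N - W M with hrdef
  set Xa := r⁻¹ • ∑ n ∈ Finset.Icc M N, dd W n • a n with hXa
  set Xb := r⁻¹ • ∑ n ∈ Finset.Icc M N, dd W n • b n with hXb
  have hdiff : ‖Xa - Xb‖ ≤ ε/4 := by
    have hXd : Xa - Xb = r⁻¹ • ∑ n ∈ Finset.Icc M N, dd W n • (a n - b n) := by
      rw [hXa, hXb, ← smul_sub, ← Finset.sum_sub_distrib]
      congr 1
      exact Finset.sum_congr rfl fun n _ => (smul_sub (dd W n) (a n) (b n)).symm
    rw [hXd, norm_smul, Real.norm_eq_abs, abs_of_pos (inv_pos.mpr hr)]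
    have hsum : ‖∑ n ∈ Finset.Icc M N, dd W n • (a n - b n)‖ ≤ (r + B) * (ε/8) := by
      calc ‖∑ n ∈ Finset.Icc M N, dd W n • (a n - b n)‖
          ≤ ∑ n ∈ Finset.Icc M N, ‖dd W n • (a n - b n)‖ := norm_sum_le _ _
        _ ≤ ∑ n ∈ Finset.Icc M N, |dd W n| * (ε/8) := by
            refine Finset.sum_le_sum fun n _ => ?_
            rw [norm_smul, Real.norm_eq_abs]
            exact mul_le_mul_of_nonneg_left (hab n) (abs_nonneg _)
        _ = (∑ n ∈ Finset.Icc M N, |dd W n|) * (ε/8) := by rw [Finset.sum_mul]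
        _ ≤ (r + B) * (ε/8) := by
            apply mul_le_mul_of_nonneg_right (hB M N hMN (le_of_lt hr)) (by linarith)
    calc r⁻¹ * ‖∑ n ∈ Finset.Icc M N, dd W n • (a n - b n)‖ ≤ r⁻¹ * ((r + B) * (ε/8)) :=
          mul_le_mul_of_nonneg_left hsum (le_of_lt (inv_pos.mpr hr))
      _ ≤ ε/4 := by
          rw [inv_mul_le_iff₀ hr]
          nlinarith
  calc ‖Xa - L‖ = ‖(Xa - Xb) + (Xb - L') + (L' - L)‖ := by ring_nf
    _ ≤ ‖(Xa - Xb) + (Xb - L')‖ + ‖L' - L‖ := norm_add_le _ _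
    _ ≤ ‖Xa - Xb‖ + ‖Xb - L'‖ + ‖L' - L‖ := by
        have := norm_add_le (Xa - Xb) (Xb - L')
        linarith
    _ < ε/4 + ε/4 + ε/8 := by
        have h3 : ‖L' - L‖ ≤ ε/8 := by rw [norm_sub_rev]; exact hLL
        have h2 : ‖Xb - L'‖ < ε/4 := e2
        linarith
    _ < ε := by linarith

lemma uwlim_char {W : ℕ → ℝ} {N₀ : ℕ} (h0 : ∀ n, N₀ ≤ n → 0 ≤ dd W n)
    (hten : Tendsto (dd W) atTop (nhds 0)) {C : ℝ} (hC : ∀ n, |dd W n| ≤ C)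
    {c : ℂ} (hc1 : 1 ≤ ‖c‖) (hre : c.re = 0) :
    UWLim W (fun n => Complex.exp (c * (W n : ℂ))) 0 := by
  have hc0 : (0:ℝ) < ‖c‖ := lt_of_lt_of_le one_pos hc1
  have hcne : c ≠ 0 := by
    intro h
    rw [h] at hc1
    simp at hc1
    linarith
  set φ : ℕ → ℂ := fun n => Complex.exp (c * (W n : ℂ)) with hφ
  have hφnorm : ∀ n : ℕ, ‖φ n‖ = 1 := by
    intro n
    rw [hφ, Complex.norm_exp]
    have : (c * (W n : ℂ)).re = 0 := by
      simp [Complex.mul_re, hre]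
    rw [this, Real.exp_zero]
  intro ε hε
  have hC0 : 0 ≤ C := le_trans (abs_nonneg _) (hC 0)
  set δ := min (ε/(4*‖c‖)) (‖c‖)⁻¹ with hδdef
  have hδ0 : 0 < δ := lt_min (by positivity) (by positivity)
  have hδle1 : δ ≤ ε/(4*‖c‖) := min_le_left _ _
  have hδle2 : δ ≤ (‖c‖)⁻¹ := min_le_right _ _
  clear_value δ
  clear hδdef
  obtain ⟨N₂, hN₂⟩ := (Metric.tendsto_atTop.mp hten) δ hδ0
  set N₁ := max N₂ N₀ with hN₁
  have hδsmall : ∀ n, N₁ ≤ n → |dd W n| ≤ δ := by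
    intro n hn
    have := hN₂ n (le_trans (le_max_left _ _) hn)
    rw [Real.dist_eq, sub_zero] at this
    exact this.le
  have h0' : ∀ n, N₁ ≤ n → 0 ≤ dd W n := fun n hn => h0 n (le_trans (le_max_right _ _) hn)
  set A := ∑ n ∈ Finset.range N₁, |dd W n| with hA
  have hA0 : 0 ≤ A := Finset.sum_nonneg fun n _ => abs_nonneg _
  have hAbound : ∀ s : Finset ℕ, s ⊆ Finset.range N₁ → ∑ n ∈ s, |dd W n| ≤ A :=
    fun s hs => Finset.sum_le_sum_of_subset_of_nonneg hs fun n _ _ => abs_nonneg _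
  clear_value A
  clear hA
  set K := A + 2/(‖c‖) + ‖c‖ * δ * (C + A) with hKdef
  have hterm3 : 0 ≤ ‖c‖ * δ * (C + A) :=
    mul_nonneg (mul_nonneg hc0.le hδ0.le) (by linarith)
  have h2c : 0 < 2/‖c‖ := by positivity
  have hK0 : 0 < K := by rw [hKdef]; linarith
  clear_value K
  refine ⟨max 1 ⌈4*K/ε⌉₊, fun M N hMN hl => ?_⟩
  have hr1 : (1:ℝ) ≤ W N - W M := by
    refine le_trans ?_ hl
    exact_mod_cast Nat.cast_le.mpr (le_max_left _ _)
  have hr : (0:ℝ) < W N - W M := lt_of_lt_of_le one_pos hr1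
  have hrK : 4*K/ε ≤ W N - W M := by
    refine le_trans (le_trans (Nat.le_ceil _) ?_) hl
    exact_mod_cast Nat.cast_le.mpr (le_max_right _ _)
  set r := W N - W M with hrdef
  clear_value r
  -- main estimate
  have hS : ‖∑ n ∈ Finset.Icc M N, dd W n • φ n‖ ≤ K + ‖c‖ * δ * r := by
    have hterm4 : 0 ≤ ‖c‖ * δ * r := mul_nonneg (mul_nonneg hc0.le hδ0.le) hr.le
    rcases lt_or_ge N N₁ with hN | hN
    · -- everything below N₁
      have hsub : Finset.Icc M N ⊆ Finset.range N₁ := by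
        intro n hn
        rw [Finset.mem_Icc] at hn
        rw [Finset.mem_range]
        omega
      calc ‖∑ n ∈ Finset.Icc M N, dd W n • φ n‖
          ≤ ∑ n ∈ Finset.Icc M N, ‖dd W n • φ n‖ := norm_sum_le _ _
        _ = ∑ n ∈ Finset.Icc M N, |dd W n| := by
            refine Finset.sum_congr rfl fun n _ => ?_
            rw [norm_smul, Real.norm_eq_abs, hφnorm n, mul_one]
        _ ≤ A := hAbound _ hsub
        _ ≤ K + ‖c‖ * δ * r := by rw [hKdef]; linarith
    · -- main case
      set M' := max M N₁ with hM'
      have hM'N : M' ≤ N := max_le hMN hN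
      have hsubset : Finset.Icc M' N ⊆ Finset.Icc M N :=
        Finset.Icc_subset_Icc (le_max_left _ _) le_rfl
      have hsplit : ∑ n ∈ Finset.Icc M N, dd W n • φ n
          = (∑ n ∈ Finset.Icc M N \ Finset.Icc M' N, dd W n • φ n)
            + ∑ n ∈ Finset.Icc M' N, dd W n • φ n := (Finset.sum_sdiff hsubset).symm
      have hsdiff_sub : Finset.Icc M N \ Finset.Icc M' N ⊆ Finset.range N₁ := by
        intro n hn
        rw [Finset.mem_sdiff, Finset.mem_Icc, Finset.mem_Icc] at hn
        rw [Finset.mem_range]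
        obtain ⟨⟨h1, h2⟩, h3⟩ := hn
        have hnM' : n < M' := by omega
        rcases lt_max_iff.mp hnM' with h | h
        · omega
        · exact h
      have hS1 : ‖∑ n ∈ Finset.Icc M N \ Finset.Icc M' N, dd W n • φ n‖ ≤ A := by
        calc ‖∑ n ∈ Finset.Icc M N \ Finset.Icc M' N, dd W n • φ n‖
            ≤ ∑ n ∈ Finset.Icc M N \ Finset.Icc M' N, ‖dd W n • φ n‖ := norm_sum_le _ _
          _ = ∑ n ∈ Finset.Icc M N \ Finset.Icc M' N, |dd W n| := by
              refine Finset.sum_congr rfl fun n _ => ?_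
              rw [norm_smul, Real.norm_eq_abs, hφnorm n, mul_one]
          _ ≤ A := hAbound _ hsdiff_sub
      -- per-term estimate on the main part
      have key : ∀ n, N₁ ≤ n → ‖dd W n • φ n - (φ (n+1) - φ n)/c‖
          ≤ ‖c‖ * δ * dd W n := by
        intro n hn
        set z := c * (dd W n : ℂ) with hz
        have hφsucc : φ (n+1) = φ n * Complex.exp z := by
          rw [hφ, hz]
          simp only []
          rw [← Complex.exp_add]
          congr 1
          have : dd W n = W (n+1) - W n := rfl
          rw [this]
          push_cast
          ring
        have habsz : ‖z‖ ≤ 1 := by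
          rw [hz, norm_mul, Complex.norm_real, Real.norm_eq_abs]
          have h1 : |dd W n| ≤ δ := hδsmall n hn
          calc ‖c‖ * |dd W n| ≤ ‖c‖ * (‖c‖)⁻¹ :=
                mul_le_mul_of_nonneg_left (le_trans h1 hδle2) hc0.le
            _ = 1 := mul_inv_cancel₀ (ne_of_gt hc0)
        have heq : dd W n • φ n - (φ (n+1) - φ n)/c
            = -(φ n * (Complex.exp z - 1 - z))/c := by
          rw [hφsucc, Complex.real_smul, hz]
          field_simp
          ring
        rw [heq]
        rw [norm_div, norm_neg, norm_mul, hφnorm n, one_mul]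
        have hexp : ‖Complex.exp z - 1 - z‖ ≤ ‖z‖ ^ 2 :=
          Complex.norm_exp_sub_one_sub_id_le habsz
        have habsz_eq : ‖z‖ = ‖c‖ * dd W n := by
          rw [hz, norm_mul, Complex.norm_real, Real.norm_eq_abs, abs_of_nonneg (h0' n hn)]
        calc ‖Complex.exp z - 1 - z‖ / ‖c‖
            ≤ ‖z‖ ^ 2 / ‖c‖ := by gcongr
          _ = ‖c‖ * dd W n ^ 2 := by
              rw [habsz_eq]
              field_simp
          _ ≤ ‖c‖ * δ * dd W n := by
              have h1 : dd W n ≤ δ := le_trans (le_abs_self _) (hδsmall n hn)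
              have h2 : 0 ≤ dd W n := h0' n hn
              nlinarith [mul_nonneg (mul_nonneg hc0.le (sub_nonneg.mpr h1)) h2]
      have htele : ∑ n ∈ Finset.Icc M' N, (φ (n+1) - φ n) = φ (N+1) - φ M' := tele_Icc φ hM'N
      have hS2diff : ‖(∑ n ∈ Finset.Icc M' N, dd W n • φ n) - (φ (N+1) - φ M')/c‖
          ≤ ‖c‖ * δ * (W (N+1) - W M') := by
        have hrw : (∑ n ∈ Finset.Icc M' N, dd W n • φ n) - (φ (N+1) - φ M')/c
            = ∑ n ∈ Finset.Icc M' N, (dd W n • φ n - (φ (n+1) - φ n)/c) := by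
          rw [Finset.sum_sub_distrib, ← Finset.sum_div, htele]
        rw [hrw]
        calc ‖∑ n ∈ Finset.Icc M' N, (dd W n • φ n - (φ (n+1) - φ n)/c)‖
            ≤ ∑ n ∈ Finset.Icc M' N, ‖dd W n • φ n - (φ (n+1) - φ n)/c‖ := norm_sum_le _ _
          _ ≤ ∑ n ∈ Finset.Icc M' N, ‖c‖ * δ * dd W n := by
              refine Finset.sum_le_sum fun n hn => ?_
              rw [Finset.mem_Icc] at hn
              exact key n (le_trans (le_max_right _ _) hn.1)
          _ = ‖c‖ * δ * (W (N+1) - W M') := by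
              rw [← Finset.mul_sum, sum_dd_Icc W hM'N]
      have hS2 : ‖∑ n ∈ Finset.Icc M' N, dd W n • φ n‖
          ≤ 2/‖c‖ + ‖c‖ * δ * (W (N+1) - W M') := by
        have h1 : ‖(φ (N+1) - φ M')/c‖ ≤ 2/‖c‖ := by
          rw [norm_div]
          have : ‖φ (N+1) - φ M'‖ ≤ 2 := by
            calc ‖φ (N+1) - φ M'‖ ≤ ‖φ (N+1)‖ + ‖φ M'‖ :=
                norm_sub_le _ _
              _ = 2 := by rw [hφnorm, hφnorm]; norm_num
          gcongr
        calc ‖∑ n ∈ Finset.Icc M' N, dd W n • φ n‖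
            ≤ ‖(∑ n ∈ Finset.Icc M' N, dd W n • φ n) - (φ (N+1) - φ M')/c‖
              + ‖(φ (N+1) - φ M')/c‖ := by
              have := norm_sub_le ((∑ n ∈ Finset.Icc M' N, dd W n • φ n) - (φ (N+1) - φ M')/c)
                (-((φ (N+1) - φ M')/c))
              simp only [sub_neg_eq_add, sub_add_cancel, norm_neg] at this
              exact this
          _ ≤ ‖c‖ * δ * (W (N+1) - W M') + 2/‖c‖ :=
              add_le_add hS2diff h1
          _ = _ := by ring
      -- bound W(N+1) - W M'
      have hIco_sub : Finset.Ico M M' ⊆ Finset.range N₁ := by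
        intro n hn
        rw [Finset.mem_Ico] at hn
        rw [Finset.mem_range]
        rcases lt_max_iff.mp hn.2 with h | h
        · omega
        · exact h
      have hWMM' : W M - W M' ≤ A := by
        have h1 : W M' - W M = ∑ n ∈ Finset.Ico M M', dd W n := (sum_dd_Ico W (le_max_left _ _)).symm
        have h2 : -(∑ n ∈ Finset.Ico M M', |dd W n|) ≤ ∑ n ∈ Finset.Ico M M', dd W n := by
          rw [← Finset.sum_neg_distrib]
          exact Finset.sum_le_sum fun n _ => neg_abs_le _
        have h3 : ∑ n ∈ Finset.Ico M M', |dd W n| ≤ A := hAbound _ hIco_sub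
        linarith
      have hWN1 : W (N+1) - W M' ≤ r + C + A := by
        have h1 : W (N+1) - W M' = r + dd W N + (W M - W M') := by
          rw [hrdef]
          have : dd W N = W (N+1) - W N := rfl
          rw [this]
          ring
        have h2 : dd W N ≤ C := le_trans (le_abs_self _) (hC N)
        linarith
      -- combine
      rw [hsplit]
      calc ‖(∑ n ∈ Finset.Icc M N \ Finset.Icc M' N, dd W n • φ n)
            + ∑ n ∈ Finset.Icc M' N, dd W n • φ n‖
          ≤ ‖∑ n ∈ Finset.Icc M N \ Finset.Icc M' N, dd W n • φ n‖
            + ‖∑ n ∈ Finset.Icc M' N, dd W n • φ n‖ := norm_add_le _ _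
        _ ≤ A + (2/‖c‖ + ‖c‖ * δ * (W (N+1) - W M')) := add_le_add hS1 hS2
        _ ≤ A + (2/‖c‖ + ‖c‖ * δ * (r + C + A)) := by
            have := mul_le_mul_of_nonneg_left hWN1 (mul_nonneg hc0.le hδ0.le)
            linarith
        _ = K + ‖c‖ * δ * r := by rw [hKdef]; ring
  -- finish
  have hδc : ‖c‖ * δ ≤ ε/4 := by
    have := mul_le_mul_of_nonneg_left hδle1 hc0.le
    calc ‖c‖ * δ ≤ ‖c‖ * (ε/(4*‖c‖)) := this
      _ = ε/4 := by field_simp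
  have hKr : (r)⁻¹ * K ≤ ε/4 := by
    rw [inv_mul_le_iff₀ hr]
    rw [div_le_iff₀ hε] at hrK
    linarith
  rw [sub_zero, norm_smul, Real.norm_eq_abs, abs_of_pos (inv_pos.mpr hr)]
  calc r⁻¹ * ‖∑ n ∈ Finset.Icc M N, dd W n • φ n‖
      ≤ r⁻¹ * (K + ‖c‖ * δ * r) :=
        mul_le_mul_of_nonneg_left hS (le_of_lt (inv_pos.mpr hr))
    _ = r⁻¹ * K + ‖c‖ * δ := by
        field_simp
    _ ≤ ε/4 + ε/4 := add_le_add hKr hδc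
    _ < ε := by linarith

lemma fourier_real (k : ℤ) (x : ℝ) :
    (fourier k ((x : ℝ) : UnitAddCircle) : ℂ) = Complex.exp ((2*(π:ℂ)*Complex.I*k) * x) := by
  rw [fourier_coe_apply]
  norm_num

lemma integral_fourier_zero' :
    ∫ t : UnitAddCircle, (fourier 0 t : ℂ) ∂volume = 1 := by
  have h : (fun t : UnitAddCircle => (fourier 0 t : ℂ)) = fun _ => (1:ℂ) :=
    funext fun t => fourier_zero
  rw [h, integral_const]
  simp [Measure.real, UnitAddCircle.measure_univ]

lemma integral_fourier_ne_zero (k : ℤ) (hk : k ≠ 0) :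
    ∫ t : UnitAddCircle, (fourier k t : ℂ) ∂volume = 0 := by
  have hπ : (π:ℂ) ≠ 0 := Complex.ofReal_ne_zero.mpr Real.pi_ne_zero
  have hkc : (k:ℂ) ≠ 0 := Int.cast_ne_zero.mpr hk
  have hc : (2*(π:ℂ)*Complex.I*k) ≠ 0 :=
    mul_ne_zero (mul_ne_zero (mul_ne_zero two_ne_zero hπ) Complex.I_ne_zero) hkc
  have h1 : ∫ t : UnitAddCircle, (fourier k t : ℂ) ∂volume
      = ∫ x in (0:ℝ)..(0+1), (fourier k ((x : ℝ) : UnitAddCircle) : ℂ) :=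
    (UnitAddCircle.intervalIntegral_preimage 0 _).symm
  rw [h1]
  simp only [fourier_real]
  rw [integral_exp_mul_complex hc]
  have hexp : Complex.exp (2*(π:ℂ)*Complex.I*k * (0+1:ℝ)) = 1 := by
    push_cast
    rw [show (2*(π:ℂ)*Complex.I*(k:ℂ)*(0+1)) = (k:ℂ) * (2*π*Complex.I) by ring]
    exact Complex.exp_int_mul_two_pi_mul_I k
  rw [hexp]
  norm_num

lemma uwlim_vacuous {W : ℕ → ℝ} {N₀ : ℕ} (hneg : ∀ n, N₀ ≤ n → dd W n ≤ 0)
    {E : Type*} [NormedAddCommGroup E] [NormedSpace ℝ E] (a : ℕ → E) (L : E) :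
    UWLim W a L := by
  set B := ∑ n ∈ Finset.range N₀, |dd W n| with hB
  have hbound : ∀ M N : ℕ, M ≤ N → W N - W M ≤ B := by
    intro M N hMN
    rw [← sum_dd_Ico W hMN]
    rw [← Finset.sum_filter_add_sum_filter_not (Finset.Ico M N) (· < N₀) (dd W)]
    have h2 : ∑ n ∈ (Finset.Ico M N).filter (fun n => ¬ n < N₀), dd W n ≤ 0 := by
      refine Finset.sum_nonpos fun n hn => ?_
      rw [Finset.mem_filter] at hn
      exact hneg n (by omega)
    have h1 : ∑ n ∈ (Finset.Ico M N).filter (· < N₀), dd W n ≤ B := by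
      calc ∑ n ∈ (Finset.Ico M N).filter (· < N₀), dd W n
          ≤ ∑ n ∈ (Finset.Ico M N).filter (· < N₀), |dd W n| :=
            Finset.sum_le_sum fun n _ => le_abs_self _
        _ ≤ B := by
            refine Finset.sum_le_sum_of_subset_of_nonneg ?_ fun n _ _ => abs_nonneg _
            intro n hn
            rw [Finset.mem_filter] at hn
            exact Finset.mem_range.mpr hn.2
    linarith
  intro ε hε
  refine ⟨⌈B⌉₊ + 1, fun M N hMN hl => ?_⟩
  exfalso
  have h1 : B < ((⌈B⌉₊ + 1 : ℕ) : ℝ) := by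
    push_cast
    exact lt_of_le_of_lt (Nat.le_ceil _) (by linarith)
  have h2 := hbound M N hMN
  linarith

lemma exists_dd_bound {W : ℕ → ℝ} (hten : Tendsto (dd W) atTop (nhds 0)) :
    ∃ C : ℝ, ∀ n, |dd W n| ≤ C := by
  obtain ⟨N₂, hN₂⟩ := (Metric.tendsto_atTop.mp hten) 1 one_pos
  refine ⟨1 + ∑ n ∈ Finset.range N₂, |dd W n|, fun n => ?_⟩
  have hs0 : (0:ℝ) ≤ ∑ n ∈ Finset.range N₂, |dd W n| :=
    Finset.sum_nonneg fun n _ => abs_nonneg _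
  rcases lt_or_ge n N₂ with h | h
  · have := Finset.single_le_sum (f := fun n => |dd W n|) (fun i _ => abs_nonneg _)
      (Finset.mem_range.mpr h)
    linarith
  · have := hN₂ n h
    rw [Real.dist_eq, sub_zero] at this
    linarith

lemma sum_abs_dd_bound {W : ℕ → ℝ} {N₀ : ℕ} (h0 : ∀ n, N₀ ≤ n → 0 ≤ dd W n)
    {C : ℝ} (hC : ∀ n, |dd W n| ≤ C) :
    ∃ B : ℝ, ∀ M N : ℕ, M ≤ N → (0:ℝ) ≤ W N - W M →
      ∑ n ∈ Finset.Icc M N, |dd W n| ≤ (W N - W M) + B := by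
  have hC0 : 0 ≤ C := le_trans (abs_nonneg _) (hC 0)
  set A := ∑ n ∈ Finset.range N₀, |dd W n| with hA
  have hA0 : 0 ≤ A := Finset.sum_nonneg fun n _ => abs_nonneg _
  have hAbound : ∀ s : Finset ℕ, s ⊆ Finset.range N₀ → ∑ n ∈ s, |dd W n| ≤ A :=
    fun s hs => Finset.sum_le_sum_of_subset_of_nonneg hs fun n _ _ => abs_nonneg _
  refine ⟨C + 2*A, fun M N hMN hr => ?_⟩
  rcases lt_or_ge N N₀ with hN | hN
  · have hsub : Finset.Icc M N ⊆ Finset.range N₀ := by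
      intro n hn
      rw [Finset.mem_Icc] at hn
      rw [Finset.mem_range]
      omega
    have := hAbound _ hsub
    linarith
  · set M' := max M N₀ with hM'
    have hM'N : M' ≤ N := max_le hMN hN
    have hsubset : Finset.Icc M' N ⊆ Finset.Icc M N :=
      Finset.Icc_subset_Icc (le_max_left _ _) le_rfl
    have hsplit : ∑ n ∈ Finset.Icc M N, |dd W n|
        = (∑ n ∈ Finset.Icc M N \ Finset.Icc M' N, |dd W n|)
          + ∑ n ∈ Finset.Icc M' N, |dd W n| := (Finset.sum_sdiff hsubset).symm
    have hsdiff_sub : Finset.Icc M N \ Finset.Icc M' N ⊆ Finset.range N₀ := by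
      intro n hn
      rw [Finset.mem_sdiff, Finset.mem_Icc, Finset.mem_Icc] at hn
      rw [Finset.mem_range]
      obtain ⟨⟨h1, h2⟩, h3⟩ := hn
      have hnM' : n < M' := by omega
      rcases lt_max_iff.mp hnM' with h | h
      · omega
      · exact h
    have hS1 : ∑ n ∈ Finset.Icc M N \ Finset.Icc M' N, |dd W n| ≤ A := hAbound _ hsdiff_sub
    have hS2 : ∑ n ∈ Finset.Icc M' N, |dd W n| = W (N+1) - W M' := by
      rw [← sum_dd_Icc W hM'N]
      exact Finset.sum_congr rfl fun n hn => by
        rw [Finset.mem_Icc] at hn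
        exact abs_of_nonneg (h0 n (le_trans (le_max_right _ _) hn.1))
    have hIco_sub : Finset.Ico M M' ⊆ Finset.range N₀ := by
      intro n hn
      rw [Finset.mem_Ico] at hn
      rw [Finset.mem_range]
      rcases lt_max_iff.mp hn.2 with h | h
      · omega
      · exact h
    have hWMM' : W M - W M' ≤ A := by
      have h1 : W M' - W M = ∑ n ∈ Finset.Ico M M', dd W n :=
        (sum_dd_Ico W (le_max_left _ _)).symm
      have h2 : -(∑ n ∈ Finset.Ico M M', |dd W n|) ≤ ∑ n ∈ Finset.Ico M M', dd W n := by
        rw [← Finset.sum_neg_distrib]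
        exact Finset.sum_le_sum fun n _ => neg_abs_le _
      have h3 := hAbound _ hIco_sub
      linarith
    have hWN1 : W (N+1) - W M' ≤ (W N - W M) + C + A := by
      have h1 : W (N+1) - W M' = (W N - W M) + dd W N + (W M - W M') := by
        have : dd W N = W (N+1) - W N := rfl
        rw [this]
        ring
      have h2 : dd W N ≤ C := le_trans (le_abs_self _) (hC N)
      linarith
    rw [hsplit, hS2]
    linarith

lemma cm_integrable (g : C(UnitAddCircle, ℂ)) : Integrable g (volume : Measure UnitAddCircle) :=
  g.continuous.integrable_of_hasCompactSupport (HasCompactSupport.of_compactSpace _)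

/-- For `W ∈ F₁`, the sequence `π(W(n))` is well distributed on `𝕋 = ℝ/ℤ` with respect to
the uniform Riesz mean along `W` (the normalized Haar measure on `𝕋` is `volume`). -/
theorem stmt11 (W : ℕ → ℝ) (hW : MemF 1 W) :
    WellDistributed W (fun n => ((W n : ℝ) : UnitAddCircle)) (volume : Measure UnitAddCircle) := by
  have hW0 : MemF 0 (dd W) := hW
  obtain ⟨⟨N₀, hmono⟩, hten, _⟩ := hW0
  intro F
  rcases hmono with hinc | hdec
  · -- eventually nondecreasing to 0: dd W eventually ≤ 0, vacuous
    have hneg : ∀ n, N₀ ≤ n → dd W n ≤ 0 := fun n hn =>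
      ge_of_tendsto hten (eventually_atTop.mpr ⟨n, fun m hm => hinc n m hn hm⟩)
    exact uwlim_vacuous hneg _ _
  · -- main case: dd W eventually ≥ 0
    have h0 : ∀ n, N₀ ≤ n → 0 ≤ dd W n := fun n hn =>
      le_of_tendsto hten (eventually_atTop.mpr ⟨n, fun m hm => hdec n m hn hm⟩)
    obtain ⟨C, hC⟩ := exists_dd_bound hten
    obtain ⟨B, hB⟩ := sum_abs_dd_bound h0 hC
    -- property for span elements
    have hP : ∀ g ∈ Submodule.span ℂ (Set.range (@fourier 1)),
        UWLim W (fun n => (g ((W n : ℝ) : UnitAddCircle) : ℂ)) (∫ t, g t ∂volume) := by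
      intro g hg
      induction hg using Submodule.span_induction with
      | mem g hgmem =>
          obtain ⟨k, rfl⟩ := hgmem
          rcases eq_or_ne k 0 with rfl | hk
          · have hfun : (fun n => (fourier 0 ((W n : ℝ) : UnitAddCircle) : ℂ)) = fun _ => (1:ℂ) :=
              funext fun n => fourier_zero
            rw [hfun, integral_fourier_zero']
            exact uwlim_one hC
          · set c : ℂ := 2*(π:ℂ)*Complex.I*k with hc
            have hfun : (fun n => (fourier k ((W n : ℝ) : UnitAddCircle) : ℂ))
                = fun n => Complex.exp (c * (W n : ℂ)) := funext fun n => fourier_real k (W n)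
            have habs : ‖c‖ = 2*π*|(k:ℝ)| := by
              rw [hc]
              rw [norm_mul, norm_mul, norm_mul, Complex.norm_two, Complex.norm_real, Real.norm_eq_abs,
                Complex.norm_I, Complex.norm_intCast, abs_of_pos Real.pi_pos]
              push_cast
              ring
            have hk1 : (1:ℝ) ≤ |(k:ℝ)| := by
              have : (1:ℤ) ≤ |k| := Int.one_le_abs hk
              calc (1:ℝ) ≤ ((|k| : ℤ) : ℝ) := by exact_mod_cast this
                _ = |(k:ℝ)| := by push_cast; ring
            have hc1 : 1 ≤ ‖c‖ := by
              rw [habs]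
              nlinarith [Real.pi_gt_three]
            have hre : c.re = 0 := by
              rw [hc]
              simp [Complex.mul_re, Complex.mul_im]
            rw [hfun, integral_fourier_ne_zero k hk]
            exact uwlim_char h0 hten hC hc1 hre
      | zero =>
          have hfun : (fun n => ((0 : C(UnitAddCircle, ℂ)) ((W n : ℝ) : UnitAddCircle) : ℂ))
              = fun _ => (0:ℂ) := funext fun n => rfl
          have hint : ∫ t : UnitAddCircle, ((0 : C(UnitAddCircle, ℂ)) t : ℂ) ∂volume = 0 := by
            simp
          rw [hfun, hint]
          exact uwlim_zero W
      | add g h hgm hhm hg hh =>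
          have hfun : (fun n => ((g + h) ((W n : ℝ) : UnitAddCircle) : ℂ))
              = fun n => (g ((W n : ℝ) : UnitAddCircle) : ℂ) + h ((W n : ℝ) : UnitAddCircle) :=
            funext fun n => rfl
          have hint : ∫ t : UnitAddCircle, ((g + h) t : ℂ) ∂volume
              = (∫ t, g t ∂volume) + ∫ t, h t ∂volume := by
            simp only [ContinuousMap.add_apply]
            exact integral_add (cm_integrable g) (cm_integrable h)
          rw [hfun, hint]
          exact uwlim_add hg hh
      | smul r g hgm hg =>
          have hfun : (fun n => ((r • g) ((W n : ℝ) : UnitAddCircle) : ℂ))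
              = fun n => r • (g ((W n : ℝ) : UnitAddCircle) : ℂ) := funext fun n => rfl
          have hint : ∫ t : UnitAddCircle, ((r • g) t : ℂ) ∂volume = r • ∫ t, g t ∂volume := by
            simp only [ContinuousMap.smul_apply]
            exact integral_smul r _
          rw [hfun, hint]
          exact uwlim_smul r hg
    -- approximation
    apply uwlim_approx hB
    intro ε hε
    have hFmem : (F : C(UnitAddCircle, ℂ)) ∈
        closure ((Submodule.span ℂ (Set.range (@fourier 1)) : Submodule ℂ C(UnitAddCircle, ℂ)) : Set C(UnitAddCircle, ℂ)) := by
      rw [← Submodule.topologicalClosure_coe, span_fourier_closure_eq_top]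
      trivial
    obtain ⟨g, hgmem, hgdist⟩ := Metric.mem_closure_iff.mp hFmem ε hε
    refine ⟨fun n => g ((W n : ℝ) : UnitAddCircle), ∫ t, g t ∂volume, ?_, ?_, hP g hgmem⟩
    · intro n
      have h1 : F ((W n : ℝ) : UnitAddCircle) - g ((W n : ℝ) : UnitAddCircle)
          = (F - g) ((W n : ℝ) : UnitAddCircle) := rfl
      rw [h1]
      calc ‖(F - g) ((W n : ℝ) : UnitAddCircle)‖ ≤ ‖F - g‖ :=
            ContinuousMap.norm_coe_le_norm (F - g) _
        _ = dist F g := (dist_eq_norm F g).symm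
        _ ≤ ε := hgdist.le
    · have h1 : (∫ t, F t ∂(volume : Measure UnitAddCircle)) - ∫ t, g t ∂volume
          = ∫ t, ((F - g) t : ℂ) ∂volume := by
        simp only [ContinuousMap.sub_apply]
        exact (integral_sub (cm_integrable F) (cm_integrable g)).symm
      rw [h1]
      have h2 : ∀ t : UnitAddCircle, ‖((F - g) t : ℂ)‖ ≤ dist F g := fun t => by
        calc ‖(F - g) t‖ ≤ ‖F - g‖ := ContinuousMap.norm_coe_le_norm (F - g) _
          _ = dist F g := (dist_eq_norm F g).symm
      calc ‖∫ t, ((F - g) t : ℂ) ∂(volume : Measure UnitAddCircle)‖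
          ≤ dist F g * ((volume : Measure UnitAddCircle) Set.univ).toReal :=
            norm_integral_le_of_norm_le_const (Eventually.of_forall h2)
        _ = dist F g := by rw [UnitAddCircle.measure_univ]; simp
        _ ≤ ε := hgdist.le
end
end

section
/- Let ℓ ≥ 0 be an integer, let (X,B,μ,T) be an invertible measure preserving system with Koopman operator U on L²(X,B,μ), and let h ∈ L²(X,B,μ) be a weakly mixing function with ‖h‖₂ ≤ 1. Then for every ε > 0, every h' ∈ L²(X,B,μ) with ‖h'‖₂ ≤ 1 and every sufficiently large N ∈ ℕ, there exists a set D ⊆ ℕ with lower Banach density d_*(D) = 1 such that for every polynomial p ∈ ℤ[x] of degree ℓ whose ℓ-th iterated finite difference Δ^ℓ p (which is a constant integer) lies in D, one has (1/N) Σ_{n=1}^{N} |⟨U^{p(n)} h, h'⟩| ≤ ε. -/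
open Filter MeasureTheory Finset
open scoped ENNReal Classical

noncomputable section

/-- Finite difference operator for functions on `ℤ` (used for integer polynomials). -/
def fdiff (q : ℤ → ℤ) : ℤ → ℤ := fun n => q (n + 1) - q n


section PolyAux
open Polynomial
lemma taylor_coeff_natDegree (p : Polynomial ℤ) :
    (taylor (1:ℤ) p).coeff p.natDegree = p.coeff p.natDegree := by
  rw [taylor_coeff]
  set g := hasseDeriv p.natDegree p with hg
  have hdeg : g.natDegree ≤ 0 := by
    have := natDegree_hasseDeriv_le p p.natDegree
    simpa using this
  rw [eq_C_of_natDegree_le_zero hdeg, eval_C, hg, hasseDeriv_coeff]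
  simp

lemma natDegree_deltaP (p : Polynomial ℤ) (l : ℕ) (hp : p.natDegree ≤ l + 1) :
    (taylor (1:ℤ) p - p).natDegree ≤ l := by
  rw [natDegree_le_iff_coeff_eq_zero]
  intro m hm
  rw [coeff_sub]
  rcases lt_or_ge p.natDegree m with hlt | hle
  · rw [coeff_eq_zero_of_natDegree_lt hlt,
      coeff_eq_zero_of_natDegree_lt (by rwa [natDegree_taylor])]
    ring
  · have : m = p.natDegree := le_antisymm hle (by omega)
    subst this
    rw [taylor_coeff_natDegree]; ring

lemma fdiff_eval_eq (p : Polynomial ℤ) :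
    fdiff (fun m => p.eval m) = fun m => (taylor (1:ℤ) p - p).eval m := by
  funext m
  simp [fdiff, taylor_apply, eval_comp]

lemma fdiff_iter_poly_const (ℓ : ℕ) : ∀ (p : Polynomial ℤ), p.natDegree ≤ ℓ →
    ∀ x, fdiff^[ℓ] (fun m => p.eval m) x = fdiff^[ℓ] (fun m => p.eval m) 0 := by
  induction ℓ with
  | zero =>
    intro p hp x
    simp only [Function.iterate_zero, id_eq]
    rw [eq_C_of_natDegree_le_zero hp]; simp
  | succ l ih =>
    intro p hp x
    rw [Function.iterate_succ_apply, fdiff_eval_eq]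
    exact ih _ (natDegree_deltaP p l hp) x

end PolyAux

lemma fdiff_shift_sub (ℓ : ℕ) : ∀ (q : ℤ → ℤ) (r : ℤ),
    fdiff^[ℓ] (fun y => q (y + r) - q y) = fun x => fdiff^[ℓ] q (x + r) - fdiff^[ℓ] q x := by
  induction ℓ with
  | zero => intro q r; simp
  | succ l ih =>
    intro q r
    rw [Function.iterate_succ_apply, Function.iterate_succ_apply]
    have e1 : fdiff (fun y => q (y + r) - q y) = fun y => (fdiff q) (y + r) - fdiff q y := by
      funext y; simp only [fdiff]; ring_nf
    rw [e1, ih (fdiff q) r]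

lemma fdiff_iter_shift (q : ℤ → ℤ) (ℓ : ℕ) (d : ℤ) (hq : ∀ x, fdiff^[ℓ+1] q x = d) (r : ℕ) :
    ∀ x, fdiff^[ℓ] (fun y => q (y + (r:ℤ)) - q y) x = d * r := by
  intro x
  rw [fdiff_shift_sub]
  have hF : ∀ y : ℤ, fdiff^[ℓ] q (y+1) - fdiff^[ℓ] q y = d := by
    intro y; have := hq y; rwa [Function.iterate_succ_apply'] at this
  induction r with
  | zero => simp
  | succ n ih =>
    have h2 := hF (x + n)
    have e : x + ((n:ℤ)+1) = x + (n:ℤ) + 1 := by ring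
    push_cast at ih ⊢
    rw [e]
    linarith

/-- The correlation sequence. -/
def Acorr {X : Type*} [MeasurableSpace X] (μ : MeasureTheory.Measure X) (T : Equiv.Perm X)
    (h g : X → ℂ) (k : ℤ) : ℝ :=
  ‖∫ x, h ((T ^ k) x) * (starRingEnd ℂ) (g x) ∂μ‖

lemma Acorr_nonneg {X : Type*} [MeasurableSpace X] (μ : MeasureTheory.Measure X)
    (T : Equiv.Perm X) (h g : X → ℂ) (k : ℤ) : 0 ≤ Acorr μ T h g k := norm_nonneg _

section Hilbert
variable {X : Type*} [MeasurableSpace X] {μ : MeasureTheory.Measure X}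

lemma inner_toLp_toLp {g f : X → ℂ} (hg : MemLp g 2 μ) (hf : MemLp f 2 μ) :
    (inner ℂ (hg.toLp g) (hf.toLp f) : ℂ) = ∫ x, (starRingEnd ℂ) (g x) * f x ∂μ := by
  rw [MeasureTheory.L2.inner_def]
  apply integral_congr_ae
  filter_upwards [hg.coeFn_toLp, hf.coeFn_toLp] with x hx hy
  rw [hx, hy, RCLike.inner_apply, mul_comm]

lemma zpow_mp (T : Equiv.Perm X) (hT : Measurable T) (hT' : Measurable T.symm)
    (hmp : MeasurePreserving (⇑T) μ μ) :
    ∀ k : ℤ, MeasurePreserving (⇑(T ^ k)) μ μ ∧ Measurable (⇑(T ^ k)) := by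
  have hsymm : MeasurePreserving (⇑T.symm) μ μ :=
    MeasurePreserving.symm (⟨(T : Equiv.Perm X), hT, hT'⟩ : X ≃ᵐ X) hmp
  have hinv : MeasurePreserving (⇑T⁻¹) μ μ ∧ Measurable (⇑T⁻¹) := by
    rw [Equiv.Perm.inv_def]; exact ⟨hsymm, hT'⟩
  intro k
  induction k using Int.induction_on with
  | zero => simpa using ⟨MeasurePreserving.id μ, measurable_id⟩
  | succ n ih =>
    rw [zpow_add_one, Equiv.Perm.coe_mul]
    exact ⟨ih.1.comp hmp, ih.2.comp hT⟩
  | pred n ih =>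
    rw [zpow_sub_one, Equiv.Perm.coe_mul]
    exact ⟨ih.1.comp hinv.1, ih.2.comp hinv.2⟩

lemma zpow_me (T : Equiv.Perm X) (hT : Measurable T) (hT' : Measurable T.symm)
    (hmp : MeasurePreserving (⇑T) μ μ) (k : ℤ) : MeasurableEmbedding (⇑(T ^ k)) := by
  have hm : Measurable ((T ^ k : Equiv.Perm X) : X ≃ X).symm := by
    have e : (((T ^ k : Equiv.Perm X) : X ≃ X).symm : X → X) = ⇑(T ^ (-k)) := by
      rw [← Equiv.Perm.inv_def, ← zpow_neg]
    rw [e]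
    exact (zpow_mp T hT hT' hmp (-k)).2
  exact (⟨(T ^ k : Equiv.Perm X), (zpow_mp T hT hT' hmp k).2, hm⟩ : X ≃ᵐ X).measurableEmbedding
end Hilbert

lemma sum_ind_eq_card (D : Set ℕ) (s : Finset ℕ) :
    ∑ n ∈ s, Set.indicator D (fun _ => (1:ℝ)) n = ((s.filter (fun n => n ∈ D)).card : ℝ) := by
  simp only [Set.indicator_apply]
  rw [Finset.sum_boole]

lemma double_sum_split (N : ℕ) (K : ℕ → ℕ → ℝ) (hsymm : ∀ n m, K n m = K m n)
    (hdiag : ∀ n, K n n ≤ 1) (hnonneg : ∀ n m, 0 ≤ K n m) :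
    ∑ n ∈ Icc 1 N, ∑ m ∈ Icc 1 N, K n m
      ≤ N + 2 * ∑ r ∈ Icc 1 N, ∑ n ∈ Icc 1 N, K n (n + r) := by
  have tri : ∀ n m, K n m = (if m < n then K n m else 0) + ((if m = n then K n m else 0)
      + (if n < m then K n m else 0)) := by
    intro n m
    rcases lt_trichotomy m n with hc | hc | hc
    · simp [hc, lt_asymm hc, Nat.ne_of_lt hc]
    · simp [hc]
    · simp [hc, lt_asymm hc, (Nat.ne_of_lt hc).symm]
  have split : ∑ n ∈ Icc 1 N, ∑ m ∈ Icc 1 N, K n m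
      = (∑ n ∈ Icc 1 N, ∑ m ∈ Icc 1 N, if m < n then K n m else 0)
      + ((∑ n ∈ Icc 1 N, ∑ m ∈ Icc 1 N, if m = n then K n m else 0)
      + (∑ n ∈ Icc 1 N, ∑ m ∈ Icc 1 N, if n < m then K n m else 0)) := by
    rw [← Finset.sum_add_distrib, ← Finset.sum_add_distrib]
    apply Finset.sum_congr rfl; intro n _
    rw [← Finset.sum_add_distrib, ← Finset.sum_add_distrib]
    exact Finset.sum_congr rfl (fun m _ => tri n m)
  have hdiagsum : (∑ n ∈ Icc 1 N, ∑ m ∈ Icc 1 N, if m = n then K n m else 0) ≤ N := by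
    have : ∀ n ∈ Icc 1 N, (∑ m ∈ Icc 1 N, if m = n then K n m else 0) ≤ 1 := by
      intro n hn
      rw [Finset.sum_ite_eq' (Icc 1 N) n (K n), if_pos hn]
      exact hdiag n
    calc (∑ n ∈ Icc 1 N, ∑ m ∈ Icc 1 N, if m = n then K n m else 0)
        ≤ ∑ n ∈ Icc 1 N, (1:ℝ) := Finset.sum_le_sum this
      _ = N := by simp [Nat.card_Icc]
  have hswap : (∑ n ∈ Icc 1 N, ∑ m ∈ Icc 1 N, if m < n then K n m else 0)
      = (∑ n ∈ Icc 1 N, ∑ m ∈ Icc 1 N, if n < m then K n m else 0) := by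
    rw [Finset.sum_comm]
    apply Finset.sum_congr rfl; intro n _
    apply Finset.sum_congr rfl; intro m _
    rw [hsymm]
  have hupper : (∑ n ∈ Icc 1 N, ∑ m ∈ Icc 1 N, if n < m then K n m else 0)
      ≤ ∑ r ∈ Icc 1 N, ∑ n ∈ Icc 1 N, K n (n + r) := by
    rw [Finset.sum_comm (s := Icc 1 N) (t := Icc 1 N) (f := fun r n => K n (n + r))]
    apply Finset.sum_le_sum
    intro n hn
    rw [← Finset.sum_filter]
    have hfe : (Icc 1 N).filter (fun m => n < m) = Icc (n+1) N := by
      ext m; simp only [Finset.mem_filter, Finset.mem_Icc]; omega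
    rw [hfe]
    have hn' : n ≤ N := (Finset.mem_Icc.mp hn).2
    have hmap : Icc (n+1) N = (Icc 1 (N - n)).map (addLeftEmbedding n) := by
      rw [Finset.map_add_left_Icc]
      congr 1
      omega
    rw [hmap, Finset.sum_map]
    have : ∀ r, (addLeftEmbedding n) r = n + r := fun r => rfl
    simp only [this]
    apply Finset.sum_le_sum_of_subset_of_nonneg
    · apply Finset.Icc_subset_Icc_right; omega
    · intro i _ _; exact hnonneg _ _
  calc ∑ n ∈ Icc 1 N, ∑ m ∈ Icc 1 N, K n m
      = _ := split
    _ ≤ (∑ r ∈ Icc 1 N, ∑ n ∈ Icc 1 N, K n (n + r))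
        + (N + (∑ r ∈ Icc 1 N, ∑ n ∈ Icc 1 N, K n (n + r))) := by
        rw [hswap]
        exact add_le_add hupper (add_le_add hdiagsum hupper)
    _ = N + 2 * ∑ r ∈ Icc 1 N, ∑ n ∈ Icc 1 N, K n (n + r) := by ring

set_option maxHeartbeats 2000000 in
lemma keyP {X : Type*} [MeasurableSpace X] (μ : MeasureTheory.Measure X) [IsProbabilityMeasure μ]
    (T : Equiv.Perm X) (hT : Measurable T) (hT' : Measurable T.symm)
    (hmp : MeasurePreserving (⇑T) μ μ)
    (h : X → ℂ) (hh : MemLp h 2 μ) (hhnorm : eLpNorm h 2 μ ≤ 1)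
    (hwm : ∀ h'' : X → ℂ, MemLp h'' 2 μ → ∀ ε : ℝ, 0 < ε → ∃ L : ℕ,
      ∀ M N : ℕ, M + L ≤ N →
        (1 / (N - M : ℝ)) * (∑ n ∈ Finset.Ico M N, Acorr μ T h h'' (n : ℤ)) < ε) :
    ∀ L : ℕ, ∀ g : X → ℂ, MemLp g 2 μ → eLpNorm g 2 μ ≤ 1 → ∀ e : ℝ, 0 < e →
    ∃ N₀ : ℕ, 1 ≤ N₀ ∧ ∀ N : ℕ, N₀ ≤ N → ∃ D : Set ℕ,
      (∀ δ : ℝ, 0 < δ → ∃ N₁ : ℕ, ∀ N' : ℕ, N₁ ≤ N' → ∀ M : ℕ,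
        (1 - δ) * (N' : ℝ) ≤
          ∑ n ∈ Finset.Icc M (M + N'), Set.indicator D (fun _ => (1 : ℝ)) n) ∧
      (∀ d ∈ D, ∀ q : ℤ → ℤ, (∀ x, fdiff^[L] q x = (d : ℤ)) →
        ∑ n ∈ Finset.Icc 1 N, Acorr μ T h g (q (n : ℤ)) ≤ e * N) := by
  -- infrastructure
  have hmpz : ∀ k : ℤ, MeasurePreserving (⇑(T ^ k)) μ μ := fun k => (zpow_mp T hT hT' hmp k).1
  have hmez : ∀ k : ℤ, MeasurableEmbedding (⇑(T ^ k)) := zpow_me T hT hT' hmp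
  have hmemk : ∀ k : ℤ, MemLp (fun x => h ((T ^ k) x)) 2 μ :=
    fun k => hh.comp_measurePreserving (hmpz k)
  set u : ℤ → Lp ℂ 2 μ := fun k => (hmemk k).toLp _ with hu
  have hnormu : ∀ k : ℤ, ‖u k‖ ≤ 1 := by
    intro k
    rw [hu]
    rw [Lp.norm_toLp]
    have : eLpNorm (fun x => h ((T ^ k) x)) 2 μ = eLpNorm h 2 μ :=
      eLpNorm_comp_measurePreserving hh.aestronglyMeasurable (hmpz k)
    rw [this]
    calc (eLpNorm h 2 μ).toReal ≤ (1 : ℝ≥0∞).toReal :=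
          ENNReal.toReal_mono (by norm_num) hhnorm
      _ = 1 := by simp
  have hAnorm : ∀ (g : X → ℂ) (hg : MemLp g 2 μ) (k : ℤ),
      ‖(inner ℂ (hg.toLp g) (u k) : ℂ)‖ = Acorr μ T h g k := by
    intro g hg k
    rw [hu]
    rw [inner_toLp_toLp hg (hmemk k)]
    unfold Acorr
    congr 1
    apply integral_congr_ae
    filter_upwards with x
    ring
  have hwnorm : ∀ (g : X → ℂ) (hg : MemLp g 2 μ), eLpNorm g 2 μ ≤ 1 → ‖hg.toLp g‖ ≤ 1 := by
    intro g hg hgn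
    rw [Lp.norm_toLp]
    calc (eLpNorm g 2 μ).toReal ≤ (1 : ℝ≥0∞).toReal := ENNReal.toReal_mono (by norm_num) hgn
      _ = 1 := by simp
  have hAle1 : ∀ (g : X → ℂ) (hg : MemLp g 2 μ), eLpNorm g 2 μ ≤ 1 →
      ∀ k : ℤ, Acorr μ T h g k ≤ 1 := by
    intro g hg hgn k
    rw [← hAnorm g hg k]
    calc ‖(inner ℂ (hg.toLp g) (u k) : ℂ)‖ ≤ ‖hg.toLp g‖ * ‖u k‖ := norm_inner_le_norm _ _
      _ ≤ 1 * 1 := mul_le_mul (hwnorm g hg hgn) (hnormu k) (norm_nonneg _) zero_le_one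
      _ = 1 := by norm_num
  have hApair : ∀ a b : ℤ, ‖(inner ℂ (u a) (u b) : ℂ)‖ = Acorr μ T h h (b - a) := by
    intro a b
    have e1 : (inner ℂ (u a) (u b) : ℂ)
        = ∫ x, (starRingEnd ℂ) (h ((T ^ a) x)) * h ((T ^ b) x) ∂μ := by
      rw [hu]; exact inner_toLp_toLp (hmemk a) (hmemk b)
    have e2 : ∀ x : X, (starRingEnd ℂ) (h ((T ^ a) x)) * h ((T ^ b) x)
        = (fun y => (starRingEnd ℂ) (h y) * h ((T ^ (b - a)) y)) ((T ^ a) x) := by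
      intro x
      simp only
      congr 2
      rw [← Equiv.Perm.mul_apply, ← zpow_add, sub_add_cancel]
    have e3 : (inner ℂ (u a) (u b) : ℂ)
        = ∫ y, (starRingEnd ℂ) (h y) * h ((T ^ (b - a)) y) ∂μ := by
      rw [e1]
      have e2' : (∫ x, (starRingEnd ℂ) (h ((T ^ a) x)) * h ((T ^ b) x) ∂μ)
          = ∫ x, (fun y => (starRingEnd ℂ) (h y) * h ((T ^ (b - a)) y)) ((T ^ a) x) ∂μ :=
        integral_congr_ae (Filter.Eventually.of_forall e2)
      rw [e2']
      exact (hmpz a).integral_comp (hmez a)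
        (fun y => (starRingEnd ℂ) (h y) * h ((T ^ (b - a)) y))
    have e4 : (inner ℂ (u a) (u b) : ℂ) = (inner ℂ (hh.toLp h) (u (b - a)) : ℂ) := by
      rw [e3, hu, inner_toLp_toLp hh (hmemk (b - a))]
    rw [e4, hAnorm h hh]
  have hAsymm : ∀ k : ℤ, Acorr μ T h h (-k) = Acorr μ T h h k := by
    intro k
    have h1 := hApair 0 k
    have h2 := hApair k 0
    rw [zero_sub] at h2
    rw [sub_zero] at h1
    rw [← h1, ← h2, ← inner_conj_symm (u 0) (u k), RCLike.norm_conj]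
  -- the induction
  intro L
  induction L with
  | zero =>
    intro g hg hgn e he
    refine ⟨1, le_refl 1, fun N hN => ?_⟩
    refine ⟨{d : ℕ | Acorr μ T h g (d : ℤ) ≤ e}, ?_, ?_⟩
    · intro δ hδ
      rcases le_or_gt 1 δ with hδ1 | hδ1
      · refine ⟨0, fun N' _ M => ?_⟩
        have h1 : (1 - δ) * (N' : ℝ) ≤ 0 := by
          apply mul_nonpos_of_nonpos_of_nonneg <;> [linarith; positivity]
        refine le_trans h1 ?_
        rw [sum_ind_eq_card]
        exact Nat.cast_nonneg _
      · obtain ⟨L₀, hL₀⟩ := hwm g hg (e * δ / 2) (by positivity)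
        refine ⟨L₀, fun N' hN' M => ?_⟩
        have hsum := hL₀ M (M + N' + 1) (by omega)
        have hW : ∑ n ∈ Finset.Ico M (M + N' + 1), Acorr μ T h g (n : ℤ)
            < e * δ / 2 * ((N' : ℝ) + 1) := by
          have hcast : ((M + N' + 1 : ℕ) : ℝ) - (M : ℝ) = (N' : ℝ) + 1 := by push_cast; ring
          rw [hcast, one_div, inv_mul_lt_iff₀ (by positivity)] at hsum
          linarith [hsum]
        rw [show M + N' + 1 = (M + N') + 1 from rfl, Finset.Ico_add_one_right_eq_Icc] at hW
        set s := Finset.Icc M (M + N')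
        set Bad := s.filter (fun n => ¬ (n ∈ {d : ℕ | Acorr μ T h g (d : ℤ) ≤ e}))
        have hbadsum : (Bad.card : ℝ) * e ≤ ∑ n ∈ s, Acorr μ T h g (n : ℤ) := by
          calc (Bad.card : ℝ) * e = ∑ _n ∈ Bad, e := by rw [Finset.sum_const, nsmul_eq_mul]
            _ ≤ ∑ n ∈ Bad, Acorr μ T h g (n : ℤ) := by
                apply Finset.sum_le_sum
                intro n hn
                have := (Finset.mem_filter.mp hn).2
                simp only [Set.mem_setOf_eq] at this
                linarith [not_le.mp this]
            _ ≤ ∑ n ∈ s, Acorr μ T h g (n : ℤ) :=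
                Finset.sum_le_sum_of_subset_of_nonneg (Finset.filter_subset _ _)
                  (fun n _ _ => Acorr_nonneg μ T h g _)
        have hcards : (s.filter (fun n => n ∈ {d : ℕ | Acorr μ T h g (d : ℤ) ≤ e})).card
            + Bad.card = s.card := Finset.card_filter_add_card_filter_not _
        have hscard : s.card = N' + 1 := by rw [Nat.card_Icc]; omega
        rw [sum_ind_eq_card]
        have hb : (Bad.card : ℝ) < δ / 2 * ((N' : ℝ) + 1) := by
          have := lt_of_le_of_lt hbadsum hW
          have he' : 0 < e := he
          nlinarith
        have hcardR : ((s.filter (fun n => n ∈ {d : ℕ | Acorr μ T h g (d : ℤ) ≤ e})).card : ℝ)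
            = ((N' : ℝ) + 1) - (Bad.card : ℝ) := by
          have h5 := hcards
          rw [hscard] at h5
          have hc2 := congrArg (fun t : ℕ => (t : ℝ)) h5
          push_cast at hc2
          linarith
        rw [hcardR]
        nlinarith [Nat.cast_nonneg (α := ℝ) N']
    · intro d hd q hq
      simp only [Set.mem_setOf_eq] at hd
      have hqd : ∀ n : ℕ, Acorr μ T h g (q (n : ℤ)) = Acorr μ T h g (d : ℤ) := by
        intro n
        have := hq (n : ℤ)
        simp only [Function.iterate_zero, id_eq] at this
        rw [this]
      calc ∑ n ∈ Finset.Icc 1 N, Acorr μ T h g (q (n : ℤ))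
          = ∑ _n ∈ Finset.Icc 1 N, Acorr μ T h g (d : ℤ) :=
            Finset.sum_congr rfl (fun n _ => hqd n)
        _ = (N : ℝ) * Acorr μ T h g (d : ℤ) := by
            rw [Finset.sum_const, nsmul_eq_mul, Nat.card_Icc]
            norm_num
        _ ≤ (N : ℝ) * e := by
            apply mul_le_mul_of_nonneg_left hd (Nat.cast_nonneg N)
        _ = e * N := by ring
  | succ L ih =>
    intro g hg hgn e he
    have he2 : (0:ℝ) < e ^ 2 / 8 := by positivity
    obtain ⟨N₀', hN₀'1, hIH⟩ := ih h hh hhnorm (e ^ 2 / 8) he2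
    refine ⟨max N₀' (Nat.ceil (2 / e ^ 2) + 1), le_trans hN₀'1 (le_max_left _ _), fun N hN => ?_⟩
    have hNN₀' : N₀' ≤ N := le_trans (le_max_left _ _) hN
    have hN1 : 1 ≤ N := le_trans (le_trans (by omega) (le_max_right N₀' (Nat.ceil (2 / e ^ 2) + 1))) hN
    have hNR : (0:ℝ) < N := by exact_mod_cast hN1
    have hNbig : 2 / e ^ 2 ≤ (N : ℝ) := by
      have h1 : (Nat.ceil (2 / e ^ 2) : ℝ) ≥ 2 / e ^ 2 := Nat.le_ceil _
      have h2 : Nat.ceil (2 / e ^ 2) + 1 ≤ N := le_trans (le_max_right _ _) hN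
      have h3 : ((Nat.ceil (2 / e ^ 2) + 1 : ℕ) : ℝ) ≤ N := by exact_mod_cast h2
      push_cast at h3
      linarith
    obtain ⟨D', hD'dense, hD'prop⟩ := hIH N hNN₀'
    set DD : Set ℕ :=
      {d : ℕ | (((Finset.Icc 1 N).filter (fun r => ¬ (d * r ∈ D'))).card : ℝ) ≤ e ^ 2 / 8 * N}
      with hDD
    refine ⟨DD, ?_, ?_⟩
    · -- density of DD
      intro δ hδ
      set δ'' := δ * (e ^ 2 / 8) / (2 * N) with hδ''def
      have hδ'' : 0 < δ'' := by positivity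
      obtain ⟨N₁', hN₁'⟩ := hD'dense δ'' hδ''
      refine ⟨max N₁' (Nat.ceil (16 / (δ * e ^ 2)) + 1), fun N' hN' M => ?_⟩
      have hN'1 : N₁' ≤ N' := le_trans (le_max_left _ _) hN'
      have hN'big : 16 / (δ * e ^ 2) ≤ (N' : ℝ) := by
        have h1 : (Nat.ceil (16 / (δ * e ^ 2)) : ℝ) ≥ 16 / (δ * e ^ 2) := Nat.le_ceil _
        have h2 : Nat.ceil (16 / (δ * e ^ 2)) + 1 ≤ N' := le_trans (le_max_right _ _) hN'
        have h3 : ((Nat.ceil (16 / (δ * e ^ 2)) + 1 : ℕ) : ℝ) ≤ N' := by exact_mod_cast h2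
        push_cast at h3
        linarith
      -- bound on sum over the window of the bad-count
      have hperR : ∀ r ∈ Finset.Icc 1 N,
          (((Finset.Icc M (M + N')).filter (fun d => ¬ (d * r ∈ D'))).card : ℝ)
            ≤ δ'' * ((N' : ℝ) * r) + 1 := by
        intro r hr
        have hr1 : 1 ≤ r := (Finset.mem_Icc.mp hr).1
        have hinj : (((Finset.Icc M (M + N')).filter (fun d => ¬ (d * r ∈ D'))).card : ℕ)
            ≤ ((Finset.Icc (M * r) (M * r + N' * r)).filter (fun k => ¬ (k ∈ D'))).card := by
          apply Finset.card_le_card_of_injOn (fun d => d * r)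
          · intro d hd
            simp only [Finset.mem_coe, Finset.mem_filter, Finset.mem_Icc] at hd ⊢
            refine ⟨⟨?_, ?_⟩, hd.2⟩
            · exact Nat.mul_le_mul_right r hd.1.1
            · calc d * r ≤ (M + N') * r := Nat.mul_le_mul_right r hd.1.2
                _ = M * r + N' * r := by ring
          · intro a _ b _ hab
            exact Nat.eq_of_mul_eq_mul_right (by omega) hab
        have hwin := hN₁' (N' * r) (le_trans hN'1 (Nat.le_mul_of_pos_right N' (by omega))) (M * r)
        rw [sum_ind_eq_card] at hwin
        have hcards : ((Finset.Icc (M * r) (M * r + N' * r)).filter (fun k => k ∈ D')).card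
            + ((Finset.Icc (M * r) (M * r + N' * r)).filter (fun k => ¬ (k ∈ D'))).card
            = (Finset.Icc (M * r) (M * r + N' * r)).card :=
          Finset.card_filter_add_card_filter_not _
        have hscard : (Finset.Icc (M * r) (M * r + N' * r)).card = N' * r + 1 := by
          rw [Nat.card_Icc]; omega
        rw [hscard] at hcards
        have hcast : (((Finset.Icc (M * r) (M * r + N' * r)).filter (fun k => ¬ (k ∈ D'))).card : ℝ)
            = ((N' * r : ℕ) : ℝ) + 1
              - ((Finset.Icc (M * r) (M * r + N' * r)).filter (fun k => k ∈ D')).card := by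
          have hc2 := congrArg (fun t : ℕ => (t : ℝ)) hcards
          push_cast at hc2 ⊢
          linarith
        have : (((Finset.Icc M (M + N')).filter (fun d => ¬ (d * r ∈ D'))).card : ℝ)
            ≤ (((Finset.Icc (M * r) (M * r + N' * r)).filter (fun k => ¬ (k ∈ D'))).card : ℝ) := by
          exact_mod_cast hinj
        rw [hcast] at this
        have hcast2 : ((N' * r : ℕ) : ℝ) = (N' : ℝ) * r := by push_cast; ring
        rw [hcast2] at this hwin
        linarith
      -- now count bad d's in the window
      set BadD := (Finset.Icc M (M + N')).filter (fun d => ¬ (d ∈ DD)) with hBadD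
      have hsumbound : ∑ d ∈ Finset.Icc M (M + N'),
          ((((Finset.Icc 1 N).filter (fun r => ¬ (d * r ∈ D'))).card : ℝ))
          ≤ δ'' * (N' : ℝ) * N * N + N := by
        have hswap : ∑ d ∈ Finset.Icc M (M + N'),
            ((((Finset.Icc 1 N).filter (fun r => ¬ (d * r ∈ D'))).card : ℝ))
            = ∑ r ∈ Finset.Icc 1 N,
              ((((Finset.Icc M (M + N')).filter (fun d => ¬ (d * r ∈ D'))).card : ℝ)) := by
          simp only [Finset.card_filter]
          push_cast
          rw [Finset.sum_comm]
        rw [hswap]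
        calc ∑ r ∈ Finset.Icc 1 N,
              ((((Finset.Icc M (M + N')).filter (fun d => ¬ (d * r ∈ D'))).card : ℝ))
            ≤ ∑ r ∈ Finset.Icc 1 N, (δ'' * ((N' : ℝ) * r) + 1) := Finset.sum_le_sum hperR
          _ ≤ ∑ _r ∈ Finset.Icc 1 N, (δ'' * ((N' : ℝ) * N) + 1) := by
              apply Finset.sum_le_sum
              intro r hr
              have hrN : (r : ℝ) ≤ N := by exact_mod_cast (Finset.mem_Icc.mp hr).2
              have : δ'' * ((N' : ℝ) * r) ≤ δ'' * ((N' : ℝ) * N) := by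
                apply mul_le_mul_of_nonneg_left _ (le_of_lt hδ'')
                apply mul_le_mul_of_nonneg_left hrN (Nat.cast_nonneg N')
              linarith
          _ = (N : ℝ) * (δ'' * ((N' : ℝ) * N) + 1) := by
              rw [Finset.sum_const, nsmul_eq_mul, Nat.card_Icc]
              norm_num
          _ = δ'' * (N' : ℝ) * N * N + N := by ring
      have hbadbound : (BadD.card : ℝ) * (e ^ 2 / 8 * N) ≤ δ'' * (N' : ℝ) * N * N + N := by
        calc (BadD.card : ℝ) * (e ^ 2 / 8 * N) = ∑ _d ∈ BadD, e ^ 2 / 8 * N := by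
              rw [Finset.sum_const, nsmul_eq_mul]
          _ ≤ ∑ d ∈ BadD, ((((Finset.Icc 1 N).filter (fun r => ¬ (d * r ∈ D'))).card : ℝ)) := by
              apply Finset.sum_le_sum
              intro d hd
              have := (Finset.mem_filter.mp hd).2
              simp only [hDD, Set.mem_setOf_eq] at this
              linarith [not_le.mp this]
          _ ≤ ∑ d ∈ Finset.Icc M (M + N'),
              ((((Finset.Icc 1 N).filter (fun r => ¬ (d * r ∈ D'))).card : ℝ)) :=
              Finset.sum_le_sum_of_subset_of_nonneg (Finset.filter_subset _ _)
                (fun d _ _ => Nat.cast_nonneg _)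
          _ ≤ δ'' * (N' : ℝ) * N * N + N := hsumbound
      -- conclude
      have hBadcard : (BadD.card : ℝ) ≤ δ * (N' : ℝ) / 2 + 8 / e ^ 2 := by
        have hpos : (0:ℝ) < e ^ 2 / 8 * N := by positivity
        have hkey : δ'' * (N' : ℝ) * N * N + N
            = (δ * (N' : ℝ) / 2 + 8 / e ^ 2) * (e ^ 2 / 8 * N) := by
          rw [hδ''def]
          field_simp
        rw [hkey] at hbadbound
        exact le_of_mul_le_mul_right hbadbound hpos
      have hcards : ((Finset.Icc M (M + N')).filter (fun d => d ∈ DD)).card + BadD.card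
          = (Finset.Icc M (M + N')).card := Finset.card_filter_add_card_filter_not _
      have hscard : (Finset.Icc M (M + N')).card = N' + 1 := by rw [Nat.card_Icc]; omega
      rw [sum_ind_eq_card]
      have hcardR : (((Finset.Icc M (M + N')).filter (fun d => d ∈ DD)).card : ℝ)
          = ((N' : ℝ) + 1) - (BadD.card : ℝ) := by
        rw [hscard] at hcards
        have hc2 := congrArg (fun t : ℕ => (t : ℝ)) hcards
        push_cast at hc2
        linarith
      rw [hcardR]
      have h16 : 8 / e ^ 2 ≤ δ * (N' : ℝ) / 2 := by
        have h17 := mul_le_mul_of_nonneg_left hN'big (by positivity : (0:ℝ) ≤ δ / 2)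
        calc 8 / e ^ 2 = δ / 2 * (16 / (δ * e ^ 2)) := by
              field_simp
              ring
          _ ≤ δ / 2 * N' := h17
          _ = δ * N' / 2 := by ring
      linarith
    · -- the correlation estimate for d ∈ DD
      intro d hd q hq
      simp only [hDD, Set.mem_setOf_eq] at hd
      set w := hg.toLp g with hw
      set c : ℕ → ℂ := fun n => (inner ℂ w (u (q (n : ℤ))) : ℂ) with hc
      set θ : ℕ → ℂ := fun n => if c n = 0 then 1 else (‖c n‖ : ℂ) / c n with hθ
      have hθ1 : ∀ n, ‖θ n‖ = 1 := by
        intro n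
        rw [hθ]
        simp only
        split_ifs with h0
        · simp
        · rw [norm_div, Complex.norm_real, norm_norm, div_self (norm_ne_zero_iff.mpr h0)]
      have hθc : ∀ n, θ n * c n = ((‖c n‖ : ℝ) : ℂ) := by
        intro n
        rw [hθ]
        simp only
        split_ifs with h0
        · rw [h0]; simp
        · rw [div_mul_cancel₀ _ h0]
      set v := ∑ n ∈ Finset.Icc 1 N, θ n • u (q (n : ℤ)) with hv
      set S := ∑ n ∈ Finset.Icc 1 N, Acorr μ T h g (q (n : ℤ)) with hS
      have hSc : S = ∑ n ∈ Finset.Icc 1 N, ‖c n‖ := by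
        rw [hS]
        apply Finset.sum_congr rfl
        intro n _
        exact (hAnorm g hg (q (n : ℤ))).symm
      have hS0 : 0 ≤ S := by
        rw [hS]; exact Finset.sum_nonneg fun n _ => Acorr_nonneg μ T h g _
      have hSv : S ≤ ‖v‖ := by
        have hiv : (inner ℂ w v : ℂ) = ((S : ℝ) : ℂ) := by
          rw [hv, inner_sum]
          have : ∀ n ∈ Finset.Icc 1 N, (inner ℂ w (θ n • u (q (n : ℤ))) : ℂ) = ((‖c n‖ : ℝ) : ℂ) := by
            intro n _
            rw [inner_smul_right]
            exact hθc n
          rw [Finset.sum_congr rfl this, hSc]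
          push_cast
          ring
        calc S = ‖((S : ℝ) : ℂ)‖ := by rw [Complex.norm_real]; exact (abs_of_nonneg hS0).symm
          _ = ‖(inner ℂ w v : ℂ)‖ := by rw [hiv]
          _ ≤ ‖w‖ * ‖v‖ := norm_inner_le_norm _ _
          _ ≤ 1 * ‖v‖ := by
              apply mul_le_mul_of_nonneg_right _ (norm_nonneg v)
              rw [hw]; exact hwnorm g hg hgn
          _ = ‖v‖ := one_mul _
      have hv2 : ‖v‖ ^ 2 ≤ ∑ n ∈ Finset.Icc 1 N, ∑ m ∈ Finset.Icc 1 N,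
          Acorr μ T h h (q (m : ℤ) - q (n : ℤ)) := by
        have hv2a : ‖v‖ ^ 2 = RCLike.re (inner ℂ v v : ℂ) := (inner_self_eq_norm_sq v).symm
        have hv2b : (inner ℂ v v : ℂ) = ∑ n ∈ Finset.Icc 1 N, ∑ m ∈ Finset.Icc 1 N,
            (starRingEnd ℂ) (θ n) * (θ m * (inner ℂ (u (q (n : ℤ))) (u (q (m : ℤ))) : ℂ)) := by
          rw [hv, sum_inner]
          apply Finset.sum_congr rfl
          intro n _
          rw [inner_sum]
          apply Finset.sum_congr rfl
          intro m _
          simp only [inner_smul_left, inner_smul_right]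
          ring
        rw [hv2a, hv2b]
        calc RCLike.re (∑ n ∈ Finset.Icc 1 N, ∑ m ∈ Finset.Icc 1 N,
              (starRingEnd ℂ) (θ n) * (θ m * (inner ℂ (u (q (n : ℤ))) (u (q (m : ℤ))) : ℂ)))
            ≤ ‖∑ n ∈ Finset.Icc 1 N, ∑ m ∈ Finset.Icc 1 N,
              (starRingEnd ℂ) (θ n) * (θ m * (inner ℂ (u (q (n : ℤ))) (u (q (m : ℤ))) : ℂ))‖ :=
              le_trans (le_abs_self _) (RCLike.abs_re_le_norm _)
          _ ≤ ∑ n ∈ Finset.Icc 1 N, ‖∑ m ∈ Finset.Icc 1 N,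
              (starRingEnd ℂ) (θ n) * (θ m * (inner ℂ (u (q (n : ℤ))) (u (q (m : ℤ))) : ℂ))‖ :=
              norm_sum_le _ _
          _ ≤ ∑ n ∈ Finset.Icc 1 N, ∑ m ∈ Finset.Icc 1 N,
              ‖(starRingEnd ℂ) (θ n) * (θ m * (inner ℂ (u (q (n : ℤ))) (u (q (m : ℤ))) : ℂ))‖ :=
              Finset.sum_le_sum fun n _ => norm_sum_le _ _
          _ = ∑ n ∈ Finset.Icc 1 N, ∑ m ∈ Finset.Icc 1 N,
              Acorr μ T h h (q (m : ℤ) - q (n : ℤ)) := by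
              apply Finset.sum_congr rfl
              intro n _
              apply Finset.sum_congr rfl
              intro m _
              rw [norm_mul, norm_mul, RCLike.norm_conj, hθ1 n, hθ1 m, one_mul, one_mul]
              exact hApair _ _
      -- now the double sum bound
      have hdouble : ∑ n ∈ Finset.Icc 1 N, ∑ m ∈ Finset.Icc 1 N,
          Acorr μ T h h (q (m : ℤ) - q (n : ℤ))
          ≤ (N : ℝ) + 2 * ∑ r ∈ Finset.Icc 1 N, ∑ n ∈ Finset.Icc 1 N,
            Acorr μ T h h (q ((n + r : ℕ) : ℤ) - q (n : ℤ)) := by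
        exact double_sum_split N (fun n m => Acorr μ T h h (q (m : ℤ) - q (n : ℤ)))
          (fun n m => by
            show Acorr μ T h h (q (m : ℤ) - q (n : ℤ)) = Acorr μ T h h (q (n : ℤ) - q (m : ℤ))
            rw [show q (n : ℤ) - q (m : ℤ) = -(q (m : ℤ) - q (n : ℤ)) from by ring]
            exact (hAsymm _).symm)
          (fun n => by
            show Acorr μ T h h (q (n : ℤ) - q (n : ℤ)) ≤ 1
            rw [sub_self]; exact hAle1 h hh hhnorm 0)
          (fun n m => Acorr_nonneg μ T h h _)
      -- bound the r-sum using the inductive set D'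
      have hrsum : ∑ r ∈ Finset.Icc 1 N, ∑ n ∈ Finset.Icc 1 N,
          Acorr μ T h h (q ((n + r : ℕ) : ℤ) - q (n : ℤ))
          ≤ e ^ 2 / 8 * N * N + (e ^ 2 / 8 * N) * N := by
        have hterm : ∀ r ∈ Finset.Icc 1 N,
            ∑ n ∈ Finset.Icc 1 N, Acorr μ T h h (q ((n + r : ℕ) : ℤ) - q (n : ℤ))
            ≤ (if d * r ∈ D' then e ^ 2 / 8 * N else (N : ℝ)) := by
          intro r _
          have hre : ∀ n : ℕ, Acorr μ T h h (q ((n + r : ℕ) : ℤ) - q (n : ℤ))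
              = Acorr μ T h h ((fun y => q (y + (r : ℤ)) - q y) (n : ℤ)) := by
            intro n
            show Acorr μ T h h (q ((n + r : ℕ) : ℤ) - q (n : ℤ))
              = Acorr μ T h h (q ((n : ℤ) + (r : ℤ)) - q (n : ℤ))
            rw [Nat.cast_add]
          rw [Finset.sum_congr rfl (fun n _ => hre n)]
          split_ifs with hmem
          · have hfd : ∀ x : ℤ, fdiff^[L] (fun y => q (y + (r : ℤ)) - q y) x = ((d * r : ℕ) : ℤ) := by
              intro x
              rw [fdiff_iter_shift q L (d : ℤ) hq r x]
              push_cast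
              ring
            exact hD'prop (d * r) hmem (fun y => q (y + (r : ℤ)) - q y) hfd
          · calc ∑ n ∈ Finset.Icc 1 N, Acorr μ T h h ((fun y => q (y + (r : ℤ)) - q y) (n : ℤ))
                ≤ ∑ _n ∈ Finset.Icc 1 N, (1 : ℝ) :=
                  Finset.sum_le_sum fun n _ => hAle1 h hh hhnorm _
              _ = (N : ℝ) := by rw [Finset.sum_const, nsmul_eq_mul, Nat.card_Icc]; norm_num
        calc ∑ r ∈ Finset.Icc 1 N, ∑ n ∈ Finset.Icc 1 N,
              Acorr μ T h h (q ((n + r : ℕ) : ℤ) - q (n : ℤ))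
            ≤ ∑ r ∈ Finset.Icc 1 N, (if d * r ∈ D' then e ^ 2 / 8 * N else (N : ℝ)) :=
              Finset.sum_le_sum hterm
          _ = ∑ r ∈ (Finset.Icc 1 N).filter (fun r => d * r ∈ D'),
                (if d * r ∈ D' then e ^ 2 / 8 * N else (N : ℝ))
              + ∑ r ∈ (Finset.Icc 1 N).filter (fun r => ¬ (d * r ∈ D')),
                (if d * r ∈ D' then e ^ 2 / 8 * N else (N : ℝ)) :=
              (Finset.sum_filter_add_sum_filter_not _ _ _).symm
          _ ≤ e ^ 2 / 8 * N * N + (e ^ 2 / 8 * N) * N := by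
              apply add_le_add
              · calc ∑ r ∈ (Finset.Icc 1 N).filter (fun r => d * r ∈ D'),
                      (if d * r ∈ D' then e ^ 2 / 8 * N else (N : ℝ))
                    = ∑ r ∈ (Finset.Icc 1 N).filter (fun r => d * r ∈ D'), e ^ 2 / 8 * N := by
                      apply Finset.sum_congr rfl
                      intro r hr
                      rw [if_pos (Finset.mem_filter.mp hr).2]
                  _ = (((Finset.Icc 1 N).filter (fun r => d * r ∈ D')).card : ℝ) * (e ^ 2 / 8 * N) := by
                      rw [Finset.sum_const, nsmul_eq_mul]
                  _ ≤ (N : ℝ) * (e ^ 2 / 8 * N) := by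
                      apply mul_le_mul_of_nonneg_right _ (by positivity)
                      have h1 : ((Finset.Icc 1 N).filter (fun r => d * r ∈ D')).card
                          ≤ (Finset.Icc 1 N).card := Finset.card_filter_le _ _
                      have h2 : (Finset.Icc 1 N).card = N := by rw [Nat.card_Icc]; omega
                      exact_mod_cast h2 ▸ h1
                  _ = e ^ 2 / 8 * N * N := by ring
              · calc ∑ r ∈ (Finset.Icc 1 N).filter (fun r => ¬ (d * r ∈ D')),
                      (if d * r ∈ D' then e ^ 2 / 8 * N else (N : ℝ))
                    = ∑ r ∈ (Finset.Icc 1 N).filter (fun r => ¬ (d * r ∈ D')), (N : ℝ) := by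
                      apply Finset.sum_congr rfl
                      intro r hr
                      rw [if_neg (Finset.mem_filter.mp hr).2]
                  _ = (((Finset.Icc 1 N).filter (fun r => ¬ (d * r ∈ D'))).card : ℝ) * (N : ℝ) := by
                      rw [Finset.sum_const, nsmul_eq_mul]
                  _ ≤ (e ^ 2 / 8 * N) * N := by
                      apply mul_le_mul_of_nonneg_right hd (Nat.cast_nonneg N)
      -- final assembly
      have hfinal : S ^ 2 ≤ e ^ 2 * N ^ 2 := by
        have h1 : S ^ 2 ≤ ‖v‖ ^ 2 := by nlinarith [norm_nonneg v]
        have h2 : ‖v‖ ^ 2 ≤ (N : ℝ) + 2 * (e ^ 2 / 8 * N * N + (e ^ 2 / 8 * N) * N) :=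
          le_trans hv2 (le_trans hdouble (by linarith))
        have h4 : (2:ℝ) ≤ N * e ^ 2 := by
          rw [div_le_iff₀ (by positivity)] at hNbig
          linarith
        have h3 : (N : ℝ) ≤ e ^ 2 / 2 * N ^ 2 := by
          nlinarith [mul_nonneg (le_of_lt hNR) (sub_nonneg.mpr h4)]
        nlinarith
      show S ≤ e * N
      nlinarith [hfinal, hS0, mul_pos he hNR]


set_option maxHeartbeats 1000000 in
/-- For a weakly mixing `h ∈ L²` with `‖h‖₂ ≤ 1`, any `h' ∈ L²` with `‖h'‖₂ ≤ 1`, any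
`ε > 0` and any sufficiently large `N`, there is a set `D ⊆ ℕ` of lower Banach density one
such that `(1/N) ∑_{n=1}^N |⟨U^{p(n)} h, h'⟩| ≤ ε` for every `p ∈ ℤ[x]` of degree `ℓ` whose
constant `ℓ`-th finite difference `Δ^ℓ p` lies in `D`.  Here `U^m h = h ∘ T^m` is the
Koopman operator. -/
theorem stmt17 (ℓ : ℕ)
    {X : Type*} [MeasurableSpace X] (μ : Measure X) [IsProbabilityMeasure μ]
    (T : Equiv.Perm X) (hT : Measurable T) (hT' : Measurable T.symm)
    (hmp : MeasurePreserving (⇑T) μ μ)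
    (h : X → ℂ) (hh : MemLp h 2 μ) (hhnorm : eLpNorm h 2 μ ≤ 1)
    (hwm : ∀ h'' : X → ℂ, MemLp h'' 2 μ → ∀ ε : ℝ, 0 < ε → ∃ L : ℕ,
      ∀ M N : ℕ, M + L ≤ N →
        (1 / (N - M : ℝ)) *
            (∑ n ∈ Finset.Ico M N, ‖∫ x, h ((T ^ (n : ℤ)) x) * (starRingEnd ℂ) (h'' x) ∂μ‖)
          < ε)
    (ε : ℝ) (hε : 0 < ε)
    (h' : X → ℂ) (hh' : MemLp h' 2 μ) (hh'norm : eLpNorm h' 2 μ ≤ 1) :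
    ∃ N₀ : ℕ, ∀ N : ℕ, N₀ ≤ N → ∃ D : Set ℕ,
      (∀ δ : ℝ, 0 < δ → ∃ N₁ : ℕ, ∀ N' : ℕ, N₁ ≤ N' → ∀ M : ℕ,
        (1 - δ) * (N' : ℝ) ≤
          ∑ n ∈ Finset.Icc M (M + N'), Set.indicator D (fun _ => (1 : ℝ)) n) ∧
      (∀ p : Polynomial ℤ, p.natDegree = ℓ →
        (∃ d ∈ D, fdiff^[ℓ] (fun m : ℤ => Polynomial.eval m p) 0 = (d : ℤ)) →
        (1 / (N : ℝ)) *
            (∑ n ∈ Finset.Icc 1 N,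
              ‖∫ x, h ((T ^ Polynomial.eval (n : ℤ) p) x) * (starRingEnd ℂ) (h' x) ∂μ‖)
          ≤ ε) := by
  obtain ⟨N₀, hN₀1, hkey⟩ := keyP μ T hT hT' hmp h hh hhnorm hwm ℓ h' hh' hh'norm ε hε
  refine ⟨N₀, fun N hN => ?_⟩
  obtain ⟨D, hD1, hD2⟩ := hkey N hN
  refine ⟨D, hD1, ?_⟩
  rintro p hdeg ⟨d, hdD, hdval⟩
  have hconst : ∀ x : ℤ, fdiff^[ℓ] (fun m : ℤ => Polynomial.eval m p) x = (d : ℤ) := by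
    intro x
    rw [fdiff_iter_poly_const ℓ p (le_of_eq hdeg) x, hdval]
  have hsum := hD2 d hdD (fun m : ℤ => Polynomial.eval m p) hconst
  have hN1 : 1 ≤ N := le_trans hN₀1 hN
  have hNR : (0:ℝ) < N := by exact_mod_cast hN1
  have final : (1 / (N : ℝ)) *
      (∑ n ∈ Finset.Icc 1 N, Acorr μ T h h' (Polynomial.eval (n : ℤ) p)) ≤ ε := by
    have h2 : (1 / (N : ℝ)) *
        (∑ n ∈ Finset.Icc 1 N, Acorr μ T h h' (Polynomial.eval (n : ℤ) p))
        ≤ (1 / (N : ℝ)) * (ε * N) :=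
      mul_le_mul_of_nonneg_left hsum (by positivity)
    calc (1 / (N : ℝ)) *
        (∑ n ∈ Finset.Icc 1 N, Acorr μ T h h' (Polynomial.eval (n : ℤ) p))
        ≤ (1 / (N : ℝ)) * (ε * N) := h2
      _ = ε := by field_simp
  exact final
end
end
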